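/- arXiv:2208.06873 — 4 statements merged into one kernel-verified Lean document; each statement's English description precedes it below -/
import Mathlib

section
/- Let s ∈ (0,1) and set d_s = 2^{1−2s}·Γ(1−s)/Γ(s). Then for every y > 0 the function ψ_s is differentiable at y and ψ_s'(y) = −d_s · y^{2s−1} · ψ_{1−s}(y). -/
open MeasureTheory Real Filter Set

/-- The modified Bessel function of the second kind, for `y > 0` given by
`K_s(y) = ∫_0^∞ e^{−y·cosh t}·cosh(s·t) dt`. -/
noncomputable def besselK (s y : ℝ) : ℝ :=
  ∫ t in Set.Ioi (0 : ℝ), Real.exp (-(y * Real.cosh t)) * Real.cosh (s * t)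

/-- `ψ_s(y) = (2^{1−s}/Γ(s))·|y|^s·K_s(|y|)` for `y ≠ 0`, and `ψ_s(0) = 1`. -/
noncomputable def psi (s : ℝ) (y : ℝ) : ℝ :=
  if y = 0 then 1
  else (2 : ℝ) ^ (1 - s) / Real.Gamma s * |y| ^ s * besselK s |y|

-- helper lemmas

lemma mycosh_le_exp (x : ℝ) (hx : 0 ≤ x) : Real.cosh x ≤ Real.exp x := by
  rw [Real.cosh_eq]
  nlinarith [Real.exp_pos (-x), Real.exp_le_exp.mpr (neg_le_self hx),
    Real.exp_pos x]

lemma myabs_sinh_le (x : ℝ) (hx : 0 ≤ x) : |Real.sinh x| ≤ Real.exp x := by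
  rw [abs_le, Real.sinh_eq]
  have h1 := Real.exp_pos (-x)
  have h2 := Real.exp_pos x
  have h3 : Real.exp (-x) ≤ Real.exp x := Real.exp_le_exp.mpr (by linarith)
  constructor <;> nlinarith

lemma mycosh_ge (x : ℝ) (hx : 0 ≤ x) : x ^ 2 / 8 ≤ Real.cosh x := by
  have h1 : 1 + x / 2 ≤ Real.exp (x / 2) := by have := Real.add_one_le_exp (x / 2); linarith
  have h2 : Real.exp (x / 2) * Real.exp (x / 2) = Real.exp x := by
    rw [← Real.exp_add]; ring_nf
  have h3 : Real.exp (-x) > 0 := Real.exp_pos _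
  rw [Real.cosh_eq]
  nlinarith [Real.exp_pos (x/2)]

lemma eventually_le_neg (y b : ℝ) (hy : 0 < y) :
    ∀ᶠ t in atTop, b * t - y * Real.cosh t ≤ -t := by
  filter_upwards [eventually_ge_atTop (max 1 (8 * (b + 1) / y))] with t ht
  have ht1 : (1:ℝ) ≤ t := le_trans (le_max_left _ _) ht
  have ht2 : 8 * (b + 1) / y ≤ t := le_trans (le_max_right _ _) ht
  have h8 : 8 * (b + 1) ≤ y * t := by
    rw [div_le_iff₀ hy] at ht2; linarith
  have hc := mycosh_ge t (by linarith)
  nlinarith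

lemma integrable_exp_sub_cosh (y b : ℝ) (hy : 0 < y) :
    IntegrableOn (fun t => Real.exp (b * t - y * Real.cosh t)) (Ioi 0) := by
  obtain ⟨T, hT⟩ := (eventually_le_neg y b hy).exists_forall_of_atTop
  set T' := max T 0 with hT'
  have hcont : Continuous (fun t => Real.exp (b * t - y * Real.cosh t)) := by
    continuity
  have h1 : IntegrableOn (fun t => Real.exp (b * t - y * Real.cosh t)) (Ioc 0 T') :=
    hcont.integrableOn_Ioc
  have h2 : IntegrableOn (fun t => Real.exp (b * t - y * Real.cosh t)) (Ioi T') := by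
    apply Integrable.mono' (g := fun t => Real.exp (-t))
      ((exp_neg_integrableOn_Ioi T' one_pos).congr_fun (by intro x _; simp) measurableSet_Ioi)
    · exact hcont.aestronglyMeasurable.restrict
    · filter_upwards [ae_restrict_mem measurableSet_Ioi] with t ht
      rw [Real.norm_eq_abs, abs_of_pos (Real.exp_pos _)]
      exact Real.exp_le_exp.mpr (hT t (le_trans (le_max_left _ _) ht.le))
  exact (h1.union h2).mono_set (fun x hx => by
    rcases le_or_gt x T' with h | h
    · exact Or.inl ⟨hx, h⟩
    · exact Or.inr h)

lemma integrable_bessel_integrand (y a : ℝ) (hy : 0 < y) (ha : 0 ≤ a) :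
    IntegrableOn (fun t => Real.exp (-(y * Real.cosh t)) * Real.cosh (a * t)) (Ioi 0) := by
  apply Integrable.mono' (integrable_exp_sub_cosh y a hy)
  · exact (by continuity : Continuous
      (fun t => Real.exp (-(y * Real.cosh t)) * Real.cosh (a * t))).aestronglyMeasurable.restrict
  · filter_upwards [ae_restrict_mem measurableSet_Ioi] with t ht
    have ht0 : (0:ℝ) < t := ht
    have h1 : Real.cosh (a * t) ≤ Real.exp (a * t) :=
      mycosh_le_exp _ (by positivity)
    have h2 : Real.exp (a * t - y * Real.cosh t)
        = Real.exp (-(y * Real.cosh t)) * Real.exp (a * t) := by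
      rw [← Real.exp_add]; ring_nf
    rw [Real.norm_eq_abs, abs_mul, abs_of_pos (Real.exp_pos _),
      abs_of_pos (Real.cosh_pos _), h2]
    exact mul_le_mul_of_nonneg_left h1 (Real.exp_pos _).le

-- the auxiliary function and its derivative
lemma hasDerivAt_gfun (y s t : ℝ) :
    HasDerivAt (fun t => Real.exp (-(y * Real.cosh t)) * Real.sinh (s * t))
      (Real.exp (-(y * Real.cosh t)) *
        (s * Real.cosh (s * t) - y * Real.sinh t * Real.sinh (s * t))) t := by
  have h1 : HasDerivAt (fun t => -(y * Real.cosh t)) (-(y * Real.sinh t)) t :=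
    ((Real.hasDerivAt_cosh t).const_mul y).neg
  have h2 := h1.exp
  have h3 : HasDerivAt (fun t : ℝ => s * t) s t := by
    simpa using (hasDerivAt_id t).const_mul s
  have h4 : HasDerivAt (fun t => Real.sinh (s * t)) (Real.cosh (s * t) * s) t :=
    (Real.hasDerivAt_sinh (s * t)).comp t h3
  refine (h2.fun_mul h4).congr_deriv ?_
  ring

lemma tendsto_gfun (y s : ℝ) (hy : 0 < y) (hs : 0 ≤ s) :
    Tendsto (fun t => Real.exp (-(y * Real.cosh t)) * Real.sinh (s * t)) atTop (nhds 0) := by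
  rw [tendsto_zero_iff_abs_tendsto_zero]
  apply squeeze_zero' (g := fun t => Real.exp (-t))
  · exact Eventually.of_forall fun t => abs_nonneg _
  · filter_upwards [eventually_le_neg y s hy, eventually_ge_atTop (0:ℝ)] with t ht ht0
    have h1 : |Real.sinh (s * t)| ≤ Real.exp (s * t) := myabs_sinh_le _ (by positivity)
    have h2 : Real.exp (s * t - y * Real.cosh t)
        = Real.exp (-(y * Real.cosh t)) * Real.exp (s * t) := by
      rw [← Real.exp_add]; ring_nf
    calc |Real.exp (-(y * Real.cosh t)) * Real.sinh (s * t)|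
        = Real.exp (-(y * Real.cosh t)) * |Real.sinh (s * t)| := by
          rw [abs_mul, abs_of_pos (Real.exp_pos _)]
      _ ≤ Real.exp (-(y * Real.cosh t)) * Real.exp (s * t) :=
          mul_le_mul_of_nonneg_left h1 (Real.exp_pos _).le
      _ = Real.exp (s * t - y * Real.cosh t) := h2.symm
      _ ≤ Real.exp (-t) := Real.exp_le_exp.mpr ht
  · exact Real.tendsto_exp_atBot.comp tendsto_neg_atTop_atBot

lemma integrable_gderiv (y s : ℝ) (hy : 0 < y) (hs : 0 ≤ s) :
    IntegrableOn (fun t => Real.exp (-(y * Real.cosh t)) *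
      (s * Real.cosh (s * t) - y * Real.sinh t * Real.sinh (s * t))) (Ioi 0) := by
  apply Integrable.mono'
    (g := fun t => s * Real.exp (s * t - y * Real.cosh t)
      + y * Real.exp ((1 + s) * t - y * Real.cosh t))
    (((integrable_exp_sub_cosh y s hy).const_mul s).add
      ((integrable_exp_sub_cosh y (1 + s) hy).const_mul y))
  · exact (by continuity : Continuous fun t => Real.exp (-(y * Real.cosh t)) *
      (s * Real.cosh (s * t) - y * Real.sinh t * Real.sinh (s * t))).aestronglyMeasurable.restrict
  · filter_upwards [ae_restrict_mem measurableSet_Ioi] with t ht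
    have ht0 : (0:ℝ) < t := ht
    have h1 : Real.cosh (s * t) ≤ Real.exp (s * t) := mycosh_le_exp _ (by positivity)
    have h2 : |Real.sinh (s * t)| ≤ Real.exp (s * t) := myabs_sinh_le _ (by positivity)
    have h3 : |Real.sinh t| ≤ Real.exp t := myabs_sinh_le _ ht0.le
    have e1 : Real.exp (s * t - y * Real.cosh t)
        = Real.exp (-(y * Real.cosh t)) * Real.exp (s * t) := by rw [← Real.exp_add]; ring_nf
    have e2 : Real.exp ((1 + s) * t - y * Real.cosh t)
        = Real.exp (-(y * Real.cosh t)) * (Real.exp t * Real.exp (s * t)) := by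
      rw [← Real.exp_add, ← Real.exp_add]; ring_nf
    have hep := (Real.exp_pos (-(y * Real.cosh t))).le
    rw [Real.norm_eq_abs, abs_mul, abs_of_pos (Real.exp_pos _), e1, e2]
    have habs : |s * Real.cosh (s * t) - y * Real.sinh t * Real.sinh (s * t)|
        ≤ s * Real.exp (s * t) + y * (Real.exp t * Real.exp (s * t)) := by
      refine (abs_sub _ _).trans ?_
      gcongr
      · rw [abs_mul, abs_of_nonneg hs, abs_of_pos (Real.cosh_pos _)]
        exact mul_le_mul_of_nonneg_left h1 hs
      · rw [abs_mul, abs_mul, abs_of_pos hy]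
        have := mul_le_mul h3 h2 (abs_nonneg _) (Real.exp_pos t).le
        nlinarith [abs_nonneg (Real.sinh t), abs_nonneg (Real.sinh (s*t)), Real.exp_pos t]
    calc Real.exp (-(y * Real.cosh t)) * |s * Real.cosh (s * t) - y * Real.sinh t * Real.sinh (s * t)|
        ≤ Real.exp (-(y * Real.cosh t)) * (s * Real.exp (s * t) + y * (Real.exp t * Real.exp (s * t))) :=
          mul_le_mul_of_nonneg_left habs hep
      _ = s * (Real.exp (-(y * Real.cosh t)) * Real.exp (s * t))
          + y * (Real.exp (-(y * Real.cosh t)) * (Real.exp t * Real.exp (s * t))) := by ring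

lemma integral_gderiv_eq_zero (y s : ℝ) (hy : 0 < y) (hs : 0 ≤ s) :
    ∫ t in Ioi (0:ℝ), Real.exp (-(y * Real.cosh t)) *
      (s * Real.cosh (s * t) - y * Real.sinh t * Real.sinh (s * t)) = 0 := by
  have := integral_Ioi_of_hasDerivAt_of_tendsto' (a := 0)
    (f := fun t => Real.exp (-(y * Real.cosh t)) * Real.sinh (s * t))
    (fun x _ => hasDerivAt_gfun y s x) (integrable_gderiv y s hy hs) (tendsto_gfun y s hy hs)
  simpa using this

lemma key_identity (y s t : ℝ) (hy : 0 < y) :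
    (s * y ^ (s - 1) - y ^ s * Real.cosh t) *
      (Real.exp (-(y * Real.cosh t)) * Real.cosh (s * t))
    = y ^ (s - 1) * (Real.exp (-(y * Real.cosh t)) *
        (s * Real.cosh (s * t) - y * Real.sinh t * Real.sinh (s * t)))
      - y ^ s * (Real.exp (-(y * Real.cosh t)) * Real.cosh ((1 - s) * t)) := by
  have hys : y ^ s = y ^ (s - 1) * y := by
    rw [← Real.rpow_add_one hy.ne' (s - 1)]; ring_nf
  have hc : Real.cosh ((1 - s) * t)
      = Real.cosh t * Real.cosh (s * t) - Real.sinh t * Real.sinh (s * t) := by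
    rw [show (1 - s) * t = t - s * t by ring, Real.cosh_sub]
  rw [hys, hc]; ring

lemma hasDerivAt_main (s : ℝ) (hs0 : 0 < s) (hs1 : s < 1) (y : ℝ) (hy : 0 < y) :
    HasDerivAt (fun x => x ^ s * besselK s x) (-(y ^ s * besselK (1 - s) y)) y := by
  have hy2 : (0:ℝ) < y / 2 := by linarith
  set c1 := s * (y / 2) ^ (s - 1) with hc1
  set c2 := (3 * y / 2) ^ s with hc2
  have key := hasDerivAt_integral_of_dominated_loc_of_deriv_le (μ := volume.restrict (Ioi 0))
    (x₀ := y)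
    (F := fun x t => x ^ s * (Real.exp (-(x * Real.cosh t)) * Real.cosh (s * t)))
    (F' := fun x t => (s * x ^ (s - 1) - x ^ s * Real.cosh t) *
      (Real.exp (-(x * Real.cosh t)) * Real.cosh (s * t)))
    (bound := fun t => c1 * Real.exp (s * t - y / 2 * Real.cosh t)
      + c2 * Real.exp ((1 + s) * t - y / 2 * Real.cosh t))
    (Metric.ball_mem_nhds y hy2)
    (Eventually.of_forall fun x => (by continuity : Continuous fun t =>
      x ^ s * (Real.exp (-(x * Real.cosh t)) * Real.cosh (s * t))).aestronglyMeasurable.restrict)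
    ((integrable_bessel_integrand y s hy hs0.le).const_mul _)
    ((by continuity : Continuous fun t => (s * y ^ (s - 1) - y ^ s * Real.cosh t) *
      (Real.exp (-(y * Real.cosh t)) * Real.cosh (s * t))).aestronglyMeasurable.restrict)
    ?_
    (((integrable_exp_sub_cosh (y/2) s hy2).const_mul c1).add
      ((integrable_exp_sub_cosh (y/2) (1 + s) hy2).const_mul c2))
    ?_
  · -- use the conclusion
    obtain ⟨-, hder⟩ := key
    have hfun : (fun x => ∫ t in Ioi (0:ℝ),
        x ^ s * (Real.exp (-(x * Real.cosh t)) * Real.cosh (s * t)))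
        = fun x => x ^ s * besselK s x := by
      funext x
      rw [besselK, ← integral_const_mul]
    have hval : (∫ t in Ioi (0:ℝ), (s * y ^ (s - 1) - y ^ s * Real.cosh t) *
        (Real.exp (-(y * Real.cosh t)) * Real.cosh (s * t)))
        = -(y ^ s * besselK (1 - s) y) := by
      have : (fun t => (s * y ^ (s - 1) - y ^ s * Real.cosh t) *
          (Real.exp (-(y * Real.cosh t)) * Real.cosh (s * t)))
          = fun t => y ^ (s - 1) * (Real.exp (-(y * Real.cosh t)) *
            (s * Real.cosh (s * t) - y * Real.sinh t * Real.sinh (s * t)))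
          - y ^ s * (Real.exp (-(y * Real.cosh t)) * Real.cosh ((1 - s) * t)) :=
        funext fun t => key_identity y s t hy
      rw [this, integral_sub (((integrable_gderiv y s hy hs0.le).const_mul _))
        ((integrable_bessel_integrand y (1 - s) hy (by linarith)).const_mul _),
        integral_const_mul, integral_const_mul, integral_gderiv_eq_zero y s hy hs0.le,
        besselK]
      ring
    rw [hfun, hval] at hder
    exact hder
  · -- bound
    refine (ae_restrict_mem measurableSet_Ioi).mono fun t ht x hx => ?_
    have ht0 : (0:ℝ) < t := ht
    rw [Metric.mem_ball, Real.dist_eq, abs_lt] at hx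
    have hxl : y / 2 < x := by linarith
    have hxu : x < 3 * y / 2 := by linarith
    have hx0 : (0:ℝ) < x := lt_trans hy2 hxl
    have a1 : x ^ (s - 1) ≤ (y / 2) ^ (s - 1) :=
      Real.rpow_le_rpow_of_nonpos hy2 hxl.le (by linarith)
    have a2 : x ^ s ≤ (3 * y / 2) ^ s := Real.rpow_le_rpow hx0.le hxu.le hs0.le
    have a3 : Real.exp (-(x * Real.cosh t)) ≤ Real.exp (-(y / 2 * Real.cosh t)) := by
      apply Real.exp_le_exp.mpr
      have := Real.cosh_pos t
      nlinarith
    have a4 : Real.cosh (s * t) ≤ Real.exp (s * t) := mycosh_le_exp _ (by positivity)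
    have a5 : Real.cosh t ≤ Real.exp t := mycosh_le_exp _ ht0.le
    have e1 : Real.exp (s * t - y / 2 * Real.cosh t)
        = Real.exp (-(y / 2 * Real.cosh t)) * Real.exp (s * t) := by
      rw [← Real.exp_add]; ring_nf
    have e2 : Real.exp ((1 + s) * t - y / 2 * Real.cosh t)
        = Real.exp (-(y / 2 * Real.cosh t)) * (Real.exp t * Real.exp (s * t)) := by
      rw [← Real.exp_add, ← Real.exp_add]; ring_nf
    have hx1 : (0:ℝ) < x ^ (s - 1) := Real.rpow_pos_of_pos hx0 _
    have hx2 : (0:ℝ) < x ^ s := Real.rpow_pos_of_pos hx0 _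
    have habs : |s * x ^ (s - 1) - x ^ s * Real.cosh t|
        ≤ s * x ^ (s - 1) + x ^ s * Real.cosh t := by
      refine (abs_sub _ _).trans ?_
      rw [abs_of_pos (by positivity), abs_of_pos (by positivity)]
    calc ‖(s * x ^ (s - 1) - x ^ s * Real.cosh t) *
          (Real.exp (-(x * Real.cosh t)) * Real.cosh (s * t))‖
        = |s * x ^ (s - 1) - x ^ s * Real.cosh t| *
          (Real.exp (-(x * Real.cosh t)) * Real.cosh (s * t)) := by
          rw [Real.norm_eq_abs, abs_mul, abs_of_pos (mul_pos (Real.exp_pos _) (Real.cosh_pos _))]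
      _ ≤ (s * x ^ (s - 1) + x ^ s * Real.cosh t) *
          (Real.exp (-(x * Real.cosh t)) * Real.cosh (s * t)) := by
          apply mul_le_mul_of_nonneg_right habs (by positivity)
      _ ≤ (c1 + c2 * Real.exp t) *
          (Real.exp (-(y / 2 * Real.cosh t)) * Real.exp (s * t)) := by
          apply mul_le_mul
          · rw [hc1, hc2]
            have := Real.cosh_pos t
            nlinarith
          · have := Real.cosh_pos (s * t)
            have := Real.exp_pos (-(x * Real.cosh t))
            nlinarith
          · positivity
          · have : (0:ℝ) < c1 := by rw [hc1]; positivity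
            have : (0:ℝ) < c2 := by rw [hc2]; positivity
            nlinarith [Real.exp_pos t]
      _ = c1 * Real.exp (s * t - y / 2 * Real.cosh t)
          + c2 * Real.exp ((1 + s) * t - y / 2 * Real.cosh t) := by
          rw [e1, e2]; ring
  · -- differentiability
    refine (ae_restrict_mem measurableSet_Ioi).mono fun t ht x hx => ?_
    rw [Metric.mem_ball, Real.dist_eq, abs_lt] at hx
    have hx0 : (0:ℝ) < x := by linarith
    have h1 : HasDerivAt (fun x : ℝ => x ^ s) (s * x ^ (s - 1)) x :=
      Real.hasDerivAt_rpow_const (Or.inl hx0.ne')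
    have h2 : HasDerivAt (fun x : ℝ => -(x * Real.cosh t)) (-Real.cosh t) x := by
      simpa using ((hasDerivAt_id x).mul_const (Real.cosh t)).fun_neg
    have h3 := (h2.exp).mul_const (Real.cosh (s * t))
    refine (h1.fun_mul h3).congr_deriv ?_
    ring

/-- for `s ∈ (0,1)` and `d_s = 2^{1−2s}·Γ(1−s)/Γ(s)`, for every `y > 0`
`ψ_s` is differentiable at `y` with `ψ_s'(y) = −d_s·y^{2s−1}·ψ_{1−s}(y)`. -/
theorem psi_hasDerivAt_of_lt_one (s : ℝ) (hs0 : 0 < s) (hs1 : s < 1)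
    (d : ℝ) (hd : d = (2 : ℝ) ^ (1 - 2 * s) * Real.Gamma (1 - s) / Real.Gamma s) :
    ∀ y : ℝ, 0 < y →
      HasDerivAt (psi s) (-(d * y ^ (2 * s - 1) * psi (1 - s) y)) y := by
  intro y hy
  have hs1' : 0 < 1 - s := by linarith
  set c := (2:ℝ) ^ (1 - s) / Real.Gamma s with hc
  have hK := (hasDerivAt_main s hs0 hs1 y hy).const_mul c
  have heq : (fun x => c * (x ^ s * besselK s x)) =ᶠ[nhds y] psi s := by
    filter_upwards [eventually_gt_nhds hy] with x hx
    rw [psi, if_neg hx.ne', abs_of_pos hx, mul_assoc]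
  have hD : HasDerivAt (psi s) (c * -(y ^ s * besselK (1 - s) y)) y :=
    hK.congr_of_eventuallyEq heq.symm
  convert hD using 1
  rw [hd, psi, if_neg hy.ne', abs_of_pos hy]
  have hG1 : Real.Gamma s ≠ 0 := (Real.Gamma_pos_of_pos hs0).ne'
  have hG2 : Real.Gamma (1 - s) ≠ 0 := (Real.Gamma_pos_of_pos hs1').ne'
  have h1 : (1 : ℝ) - (1 - s) = s := by ring
  rw [h1]
  have hy1 : y ^ (2 * s - 1) * y ^ (1 - s) = y ^ s := by
    rw [← Real.rpow_add hy]; ring_nf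
  have h2 : (2:ℝ) ^ (1 - 2 * s) * (2:ℝ) ^ s = (2:ℝ) ^ (1 - s) := by
    rw [← Real.rpow_add two_pos]; ring_nf
  rw [hc]
  field_simp
  linear_combination (-(besselK (1-s) y) * (2:ℝ) ^ (1 - 2 * s) * (2:ℝ) ^ s) * hy1
    + (-(besselK (1-s) y) * y ^ s) * h2
end

section
/- Let s ∈ (0,1) and set d_s = 2^{1−2s}·Γ(1−s)/Γ(s). Then for every y > 0 the function ψ_s is twice differentiable at y and −ψ_s''(y) + ψ_s(y) = d_s·(2s−1) · y^{2(s−1)} · ψ_{1−s}(y). -/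
open MeasureTheory Real Filter Set

open Topology

lemma cosh_le_exp_abs (x : ℝ) : Real.cosh x ≤ Real.exp |x| := by
  rw [Real.cosh_eq]
  have h1 : Real.exp x ≤ Real.exp |x| := Real.exp_le_exp.2 (le_abs_self x)
  have h2 : Real.exp (-x) ≤ Real.exp |x| := Real.exp_le_exp.2 (neg_le_abs x)
  linarith

lemma abs_sinh_le_exp_abs (x : ℝ) : |Real.sinh x| ≤ Real.exp |x| := by
  rw [Real.sinh_eq]
  have h1 : Real.exp x ≤ Real.exp |x| := Real.exp_le_exp.2 (le_abs_self x)
  have h2 : Real.exp (-x) ≤ Real.exp |x| := Real.exp_le_exp.2 (neg_le_abs x)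
  have h3 : (0:ℝ) < Real.exp (-x) := Real.exp_pos _
  have h4 : (0:ℝ) < Real.exp x := Real.exp_pos _
  rw [abs_le]
  constructor <;> nlinarith

lemma cosh_quad {t : ℝ} (ht : 0 ≤ t) : t + t ^ 2 / 4 ≤ 2 * Real.cosh t := by
  have h1 : 1 + t / 2 ≤ Real.exp (t / 2) := by
    have := Real.add_one_le_exp (t / 2); linarith
  have h2 : (1 + t / 2) ^ 2 ≤ Real.exp (t / 2) ^ 2 := by nlinarith
  have h3 : Real.exp (t / 2) ^ 2 = Real.exp t := by
    rw [sq, ← Real.exp_add]; ring_nf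
  have h4 : Real.exp (-t) ≥ 0 := (Real.exp_pos _).le
  rw [Real.cosh_eq]
  nlinarith

lemma key_tendsto {y : ℝ} (hy : 0 < y) (c : ℝ) :
    Tendsto (fun t => c * t - y * Real.cosh t) atTop atBot := by
  refine tendsto_atBot_mono' atTop ?_ tendsto_neg_atTop_atBot
  filter_upwards [eventually_ge_atTop (max 1 (8 * (|c| + 1) / y))] with t ht
  have ht1 : (1:ℝ) ≤ t := le_trans (le_max_left _ _) ht
  have ht2 : 8 * (|c| + 1) ≤ t * y := (div_le_iff₀ hy).1 (le_trans (le_max_right _ _) ht)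
  have hc := cosh_quad (by linarith : (0:ℝ) ≤ t)
  have hca : c ≤ |c| := le_abs_self c
  nlinarith [sq_nonneg t, mul_nonneg (by linarith : (0:ℝ) ≤ t) hy.le]

lemma bound_eventually {y : ℝ} (hy : 0 < y) (c : ℝ) :
    ∀ᶠ t in atTop, Real.exp (c * t - y * Real.cosh t) ≤ Real.exp (-t) := by
  have h := (key_tendsto hy (c + 1)).eventually_le_atBot 0
  filter_upwards [h] with t ht
  exact Real.exp_le_exp.2 (by nlinarith [ht])

lemma tendsto_aux {y C c : ℝ} (hy : 0 < y) {f : ℝ → ℝ}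
    (hb : ∀ t, 0 ≤ t → |f t| ≤ C * Real.exp (c * t)) :
    Tendsto (fun t => Real.exp (-(y * Real.cosh t)) * f t) atTop (𝓝 0) := by
  refine squeeze_zero_norm' (a := fun t => C * Real.exp (c * t - y * Real.cosh t)) ?_ ?_
  · filter_upwards [eventually_ge_atTop (0:ℝ)] with t ht
    have h1 := hb t ht
    have h2 : Real.exp (-(y * Real.cosh t)) > 0 := Real.exp_pos _
    calc ‖Real.exp (-(y * Real.cosh t)) * f t‖
        = Real.exp (-(y * Real.cosh t)) * |f t| := by
          rw [norm_mul, Real.norm_eq_abs, Real.norm_eq_abs, abs_of_pos h2]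
      _ ≤ Real.exp (-(y * Real.cosh t)) * (C * Real.exp (c * t)) := by
          exact mul_le_mul_of_nonneg_left h1 h2.le
      _ = C * Real.exp (c * t - y * Real.cosh t) := by
          rw [Real.exp_sub, Real.exp_neg]; field_simp; try ring
  · rw [show (0:ℝ) = C * 0 by ring]
    exact (Real.tendsto_exp_atBot.comp (key_tendsto hy c)).const_mul C

lemma integrable_aux {y C c : ℝ} (hy : 0 < y) {f : ℝ → ℝ} (hf : Continuous f)
    (hb : ∀ t, 0 ≤ t → |f t| ≤ C * Real.exp (c * t)) :
    IntegrableOn (fun t => Real.exp (-(y * Real.cosh t)) * f t) (Ioi (0:ℝ)) := by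
  apply integrable_of_isBigO_exp_neg (a := 0) (b := 1) one_pos
  · exact ((Real.continuous_exp.comp (by continuity)).mul hf).continuousOn
  · rw [Asymptotics.isBigO_iff]
    refine ⟨C, ?_⟩
    filter_upwards [eventually_ge_atTop (0:ℝ), bound_eventually hy c] with t ht hle
    have h1 := hb t ht
    have h2 : Real.exp (-(y * Real.cosh t)) > 0 := Real.exp_pos _
    have hC : 0 ≤ C := by have h := hb 0 le_rfl; simp at h; linarith [abs_nonneg (f 0)]
    calc ‖Real.exp (-(y * Real.cosh t)) * f t‖
        = Real.exp (-(y * Real.cosh t)) * |f t| := by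
          rw [norm_mul, Real.norm_eq_abs, Real.norm_eq_abs, abs_of_pos h2]
      _ ≤ Real.exp (-(y * Real.cosh t)) * (C * Real.exp (c * t)) := by
          exact mul_le_mul_of_nonneg_left h1 h2.le
      _ = C * Real.exp (c * t - y * Real.cosh t) := by
          rw [Real.exp_sub, Real.exp_neg]; field_simp; try ring
      _ ≤ C * Real.exp (-t) := mul_le_mul_of_nonneg_left hle hC
      _ = C * ‖Real.exp (-1 * t)‖ := by rw [Real.norm_eq_abs, abs_of_pos (Real.exp_pos _)]; ring_nf

noncomputable def J (n : ℕ) (s y : ℝ) : ℝ :=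
  ∫ t in Set.Ioi (0:ℝ), Real.cosh t ^ n * (Real.exp (-(y * Real.cosh t)) * Real.cosh (s * t))

lemma bound_pow_cosh (n : ℕ) (a : ℝ) {t : ℝ} (ht : 0 ≤ t) :
    |Real.cosh t ^ n * Real.cosh (a * t)| ≤ 1 * Real.exp ((n + |a|) * t) := by
  have h1 : (0:ℝ) < Real.cosh t := Real.cosh_pos t
  have h2 : Real.cosh t ≤ Real.exp t := by
    have := cosh_le_exp_abs t; rwa [abs_of_nonneg ht] at this
  have h3 : Real.cosh (a * t) ≤ Real.exp (|a| * t) := by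
    have := cosh_le_exp_abs (a * t)
    rwa [abs_mul, abs_of_nonneg ht] at this
  have h4 : Real.cosh t ^ n ≤ Real.exp t ^ n := pow_le_pow_left₀ h1.le h2 n
  have h6 := Real.cosh_pos (a * t)
  rw [abs_of_pos (mul_pos (pow_pos h1 n) h6), one_mul, add_mul, Real.exp_add]
  calc Real.cosh t ^ n * Real.cosh (a * t) ≤ Real.exp t ^ n * Real.exp (|a| * t) :=
        mul_le_mul h4 h3 h6.le (by positivity)
    _ = Real.exp (↑n * t) * Real.exp (|a| * t) := by rw [← Real.exp_nat_mul]

lemma integrableJ (n : ℕ) (a : ℝ) {y : ℝ} (hy : 0 < y) :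
    IntegrableOn (fun t => Real.cosh t ^ n * (Real.exp (-(y * Real.cosh t)) * Real.cosh (a * t)))
      (Ioi (0:ℝ)) := by
  have := integrable_aux (C := 1) (c := (n + |a|)) hy
    (f := fun t => Real.cosh t ^ n * Real.cosh (a * t))
    ((Real.continuous_cosh.pow n).mul (Real.continuous_cosh.comp (continuous_const.mul continuous_id)))
    (fun t ht => bound_pow_cosh n a ht)
  apply this.congr_fun ?_ measurableSet_Ioi
  intro t _; ring

lemma hasDerivJ (n : ℕ) (s : ℝ) {y : ℝ} (hy : 0 < y) :
    HasDerivAt (J n s) (-(J (n+1) s y)) y := by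
  have hball : ∀ x ∈ Metric.ball y (y/2), y/2 < x := by
    intro x hx
    rw [Metric.mem_ball, Real.dist_eq, abs_lt] at hx
    linarith [hx.1]
  have main := hasDerivAt_integral_of_dominated_loc_of_deriv_le (μ := volume.restrict (Ioi 0))
    (F := fun x t => Real.cosh t ^ n * (Real.exp (-(x * Real.cosh t)) * Real.cosh (s * t)))
    (F' := fun x t => -(Real.cosh t ^ (n+1) * (Real.exp (-(x * Real.cosh t)) * Real.cosh (s * t))))
    (bound := fun t => Real.cosh t ^ (n+1) * (Real.exp (-(y/2 * Real.cosh t)) * Real.cosh (s * t)))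
    (x₀ := y) (Metric.ball_mem_nhds y (half_pos hy))
    ?_ ?_ ?_ ?_ ?_ ?_
  · have h2 : (∫ t in Ioi (0:ℝ), -(Real.cosh t ^ (n+1) * (Real.exp (-(y * Real.cosh t)) * Real.cosh (s * t)))) = -(J (n+1) s y) := by
      rw [integral_neg]; rfl
    rw [← h2]
    exact main.2
  · refine Eventually.of_forall fun x => Continuous.aestronglyMeasurable ?_
    exact (Real.continuous_cosh.pow n).mul
      ((Real.continuous_exp.comp ((continuous_const.mul Real.continuous_cosh).neg)).mul
        (Real.continuous_cosh.comp (continuous_const.mul continuous_id)))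
  · exact integrableJ n s hy
  · refine Continuous.aestronglyMeasurable ?_
    exact ((Real.continuous_cosh.pow (n+1)).mul
      ((Real.continuous_exp.comp ((continuous_const.mul Real.continuous_cosh).neg)).mul
        (Real.continuous_cosh.comp (continuous_const.mul continuous_id)))).neg
  · refine (ae_restrict_iff' measurableSet_Ioi).2 (ae_of_all _ ?_)
    intro t ht x hx
    have h1 : (0:ℝ) < Real.cosh t := Real.cosh_pos t
    have h3 : (0:ℝ) < Real.cosh (s*t) := Real.cosh_pos _
    rw [norm_neg, norm_mul, norm_mul, Real.norm_eq_abs, Real.norm_eq_abs, Real.norm_eq_abs,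
      abs_of_pos (pow_pos h1 _), abs_of_pos (Real.exp_pos _), abs_of_pos h3]
    have hxe : Real.exp (-(x * Real.cosh t)) ≤ Real.exp (-(y/2 * Real.cosh t)) := by
      apply Real.exp_le_exp.2
      have := hball x hx
      nlinarith
    exact mul_le_mul_of_nonneg_left (mul_le_mul_of_nonneg_right hxe h3.le)
      (pow_nonneg h1.le _)
  · exact integrableJ (n+1) s (half_pos hy)
  · refine (ae_restrict_iff' measurableSet_Ioi).2 (ae_of_all _ ?_)
    intro t ht x hx
    have h0 : HasDerivAt (fun z : ℝ => z * Real.cosh t) (Real.cosh t) x := by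
      simpa using (hasDerivAt_id x).mul_const (Real.cosh t)
    have h1 : HasDerivAt (fun z : ℝ => -(z * Real.cosh t)) (-Real.cosh t) x := h0.neg
    have h2 := (h1.exp).const_mul (Real.cosh t ^ n * Real.cosh (s * t))
    have hfun : (fun z : ℝ => Real.cosh t ^ n * (Real.exp (-(z * Real.cosh t)) * Real.cosh (s*t)))
        = fun z => (Real.cosh t ^ n * Real.cosh (s * t)) * Real.exp (-(z * Real.cosh t)) := by
      funext z; ring
    rw [hfun]
    refine h2.congr_deriv ?_
    ring

lemma exp_deriv_aux {y : ℝ} (t : ℝ) :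
    HasDerivAt (fun u => Real.exp (-(y * Real.cosh u))) (Real.exp (-(y * Real.cosh t)) * -(y * Real.sinh t)) t :=
  (((Real.hasDerivAt_cosh t).const_mul y).neg).exp

lemma sinh_mul_deriv (s t : ℝ) :
    HasDerivAt (fun u => Real.sinh (s * u)) (Real.cosh (s * t) * (s * 1)) t :=
  (Real.hasDerivAt_sinh (s*t)).comp t ((hasDerivAt_id t).const_mul s)

lemma cosh_mul_deriv (s t : ℝ) :
    HasDerivAt (fun u => Real.cosh (s * u)) (Real.sinh (s * t) * (s * 1)) t :=
  (Real.hasDerivAt_cosh (s*t)).comp t ((hasDerivAt_id t).const_mul s)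

lemma rec1 {y : ℝ} (hy : 0 < y) (s : ℝ) :
    J 1 s y = (s / y) * J 0 s y + J 0 (s - 1) y := by
  set f' : ℝ → ℝ := fun t => Real.exp (-(y * Real.cosh t)) *
      (Real.sinh t * Real.sinh (s * t) - (s / y) * Real.cosh (s * t)) with hf'
  have hint : IntegrableOn f' (Ioi 0) := by
    apply integrable_aux (C := 1 + |s/y|) (c := 1 + |s|) hy
    · exact (Real.continuous_sinh.mul (Real.continuous_sinh.comp
        (continuous_const.mul continuous_id))).sub
        (continuous_const.mul (Real.continuous_cosh.comp (continuous_const.mul continuous_id)))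
    · intro t ht
      have h1 : |Real.sinh t| ≤ Real.exp t := by
        have := abs_sinh_le_exp_abs t; rwa [abs_of_nonneg ht] at this
      have h2 : |Real.sinh (s*t)| ≤ Real.exp (|s| * t) := by
        have := abs_sinh_le_exp_abs (s*t); rwa [abs_mul, abs_of_nonneg ht] at this
      have h3 : Real.cosh (s*t) ≤ Real.exp (|s| * t) := by
        have := cosh_le_exp_abs (s*t); rwa [abs_mul, abs_of_nonneg ht] at this
      have h4 : (0:ℝ) < Real.cosh (s*t) := Real.cosh_pos _
      have h5 : Real.exp (|s| * t) ≤ Real.exp ((1 + |s|) * t) := by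
        apply Real.exp_le_exp.2; nlinarith
      have h6 : Real.exp t * Real.exp (|s| * t) = Real.exp ((1 + |s|) * t) := by
        rw [← Real.exp_add]; congr 1; ring
      refine (abs_sub _ _).trans ?_
      rw [abs_mul, abs_mul, abs_of_pos h4]
      nlinarith [abs_nonneg (Real.sinh t), abs_nonneg (Real.sinh (s*t)), abs_nonneg (s/y),
        Real.exp_pos ((1+|s|)*t), Real.exp_pos t,
        mul_le_mul h1 h2 (abs_nonneg _) (Real.exp_pos t).le,
        mul_le_mul_of_nonneg_left (h3.trans h5) (abs_nonneg (s/y))]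
  have hderiv : ∀ t ∈ Ici (0:ℝ), HasDerivAt
      (fun u => -(1/y) * (Real.exp (-(y * Real.cosh u)) * Real.sinh (s * u))) (f' t) t := by
    intro t _
    have h4 := ((exp_deriv_aux (y := y) t).mul (sinh_mul_deriv s t)).const_mul (-(1/y))
    have hy' : y ≠ 0 := hy.ne'
    refine h4.congr_deriv ?_
    simp only [hf']
    field_simp
    ring
  have htend : Tendsto (fun t => -(1/y) * (Real.exp (-(y * Real.cosh t)) * Real.sinh (s * t)))
      atTop (𝓝 0) := by
    have hb : ∀ t, 0 ≤ t → |(-(1/y)) * Real.sinh (s*t)| ≤ (1/y) * Real.exp (|s| * t) := by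
      intro t ht
      rw [abs_mul, abs_neg, abs_of_pos (by positivity : (0:ℝ) < 1/y)]
      have := abs_sinh_le_exp_abs (s*t); rw [abs_mul, abs_of_nonneg ht] at this
      exact mul_le_mul_of_nonneg_left this (by positivity)
    have := tendsto_aux hy (f := fun t => (-(1/y)) * Real.sinh (s*t)) hb
    exact this.congr (fun t => by ring)
  have hFTC := integral_Ioi_of_hasDerivAt_of_tendsto' (a := 0) (fun t ht => hderiv t ht) hint htend
  have hF0 : -(1/y) * (Real.exp (-(y * Real.cosh 0)) * Real.sinh (s * 0)) = 0 := by
    simp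
  rw [hF0, sub_zero] at hFTC
  -- now express ∫ f' in terms of J's
  have hpt : ∀ t : ℝ, f' t =
      Real.cosh t ^ 1 * (Real.exp (-(y * Real.cosh t)) * Real.cosh (s * t))
      - (s/y) * (Real.cosh t ^ 0 * (Real.exp (-(y * Real.cosh t)) * Real.cosh (s * t)))
      - Real.cosh t ^ 0 * (Real.exp (-(y * Real.cosh t)) * Real.cosh ((s-1) * t)) := by
    intro t
    have hc : Real.cosh ((s-1)*t) = Real.cosh (s*t) * Real.cosh t - Real.sinh (s*t) * Real.sinh t := by
      rw [show (s-1)*t = s*t - t by ring, Real.cosh_sub]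
    rw [hf']
    simp only [pow_one, pow_zero, one_mul, hc]
    ring
  have hsplit : (∫ t in Ioi (0:ℝ), f' t) = J 1 s y - (s/y) * J 0 s y - J 0 (s-1) y := by
    rw [integral_congr_ae (Eventually.of_forall hpt)]
    have hA : IntegrableOn (fun t => Real.cosh t ^ 1 * (Real.exp (-(y * Real.cosh t)) * Real.cosh (s * t))) (Ioi (0:ℝ)) := integrableJ 1 s hy
    have hB : IntegrableOn (fun t => (s/y) * (Real.cosh t ^ 0 * (Real.exp (-(y * Real.cosh t)) * Real.cosh (s * t)))) (Ioi (0:ℝ)) := (integrableJ 0 s hy).const_mul (s/y)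
    have hC : IntegrableOn (fun t => Real.cosh t ^ 0 * (Real.exp (-(y * Real.cosh t)) * Real.cosh ((s-1) * t))) (Ioi (0:ℝ)) := integrableJ 0 (s-1) hy
    have hAB : IntegrableOn (fun t => Real.cosh t ^ 1 * (Real.exp (-(y * Real.cosh t)) * Real.cosh (s * t)) - (s/y) * (Real.cosh t ^ 0 * (Real.exp (-(y * Real.cosh t)) * Real.cosh (s * t)))) (Ioi (0:ℝ)) := hA.sub hB
    rw [integral_sub hAB hC, integral_sub hA hB, integral_const_mul]
    rfl
  rw [hsplit] at hFTC
  linarith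

lemma odeJ {y : ℝ} (hy : 0 < y) (s : ℝ) :
    y^2 * J 2 s y - y * J 1 s y - (y^2 + s^2) * J 0 s y = 0 := by
  set f' : ℝ → ℝ := fun t => Real.exp (-(y * Real.cosh t)) *
      ((y^2 * Real.sinh t ^ 2 - y * Real.cosh t - s^2) * Real.cosh (s * t)) with hf'
  have hint : IntegrableOn f' (Ioi 0) := by
    apply integrable_aux (C := y^2 + y + s^2) (c := 2 + |s|) hy
    · exact (((continuous_const.mul (Real.continuous_sinh.pow 2)).sub
        (continuous_const.mul Real.continuous_cosh)).sub continuous_const).mul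
        (Real.continuous_cosh.comp (continuous_const.mul continuous_id))
    · intro t ht
      have h1 : |Real.sinh t| ≤ Real.exp t := by
        have := abs_sinh_le_exp_abs t; rwa [abs_of_nonneg ht] at this
      have h2 : Real.cosh t ≤ Real.exp t := by
        have := cosh_le_exp_abs t; rwa [abs_of_nonneg ht] at this
      have h3 : Real.cosh (s*t) ≤ Real.exp (|s| * t) := by
        have := cosh_le_exp_abs (s*t); rwa [abs_mul, abs_of_nonneg ht] at this
      have h4 : (0:ℝ) < Real.cosh (s*t) := Real.cosh_pos _
      have h5 : (0:ℝ) < Real.cosh t := Real.cosh_pos _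
      have he1 : (1:ℝ) ≤ Real.exp t := by
        rw [show (1:ℝ) = Real.exp 0 by simp]; exact Real.exp_le_exp.2 ht
      have hsq : Real.sinh t ^ 2 ≤ Real.exp t ^ 2 := by
        have := mul_le_mul h1 h1 (abs_nonneg _) (Real.exp_pos t).le
        nlinarith [sq_abs (Real.sinh t)]
      have h6 : Real.exp t ^ 2 * Real.exp (|s| * t) = Real.exp ((2 + |s|) * t) := by
        rw [sq, ← Real.exp_add, ← Real.exp_add]; congr 1; ring
      rw [abs_mul, abs_of_pos h4]
      have habs : |y^2 * Real.sinh t ^ 2 - y * Real.cosh t - s^2| ≤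
          y^2 * Real.sinh t ^ 2 + y * Real.cosh t + s^2 := by
        have hs2 : (0:ℝ) ≤ Real.sinh t ^ 2 := sq_nonneg _
        rw [abs_le]; constructor <;> nlinarith
      calc |y^2 * Real.sinh t ^ 2 - y * Real.cosh t - s^2| * Real.cosh (s*t)
          ≤ (y^2 * Real.sinh t ^ 2 + y * Real.cosh t + s^2) * Real.cosh (s*t) := by
            exact mul_le_mul_of_nonneg_right habs h4.le
        _ ≤ (y^2 * Real.exp t ^ 2 + y * Real.exp t + s^2) * Real.exp (|s| * t) := by
            apply mul_le_mul ?_ h3 h4.le ?_ <;> nlinarith [sq_nonneg s, sq_nonneg y]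
        _ ≤ (y^2 + y + s^2) * Real.exp ((2 + |s|) * t) := by
            have he2 : Real.exp t ≤ Real.exp t ^ 2 := by nlinarith
            have he3 : (1:ℝ) ≤ Real.exp t ^ 2 := by nlinarith
            have hX := Real.exp_pos (|s| * t)
            rw [← h6]
            nlinarith [sq_nonneg s, sq_nonneg y,
              mul_le_mul_of_nonneg_right he2 hX.le,
              mul_le_mul_of_nonneg_right he3 hX.le]
  have hderiv : ∀ t ∈ Ici (0:ℝ), HasDerivAt
      (fun u => Real.exp (-(y * Real.cosh u)) *
        (-(y * Real.sinh u * Real.cosh (s * u)) - s * Real.sinh (s * u))) (f' t) t := by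
    intro t _
    have hg : HasDerivAt (fun u => -(y * Real.sinh u * Real.cosh (s * u)) - s * Real.sinh (s * u))
        (-((y * Real.cosh t) * Real.cosh (s*t) + (y * Real.sinh t) * (Real.sinh (s*t) * (s*1)))
          - s * (Real.cosh (s*t) * (s*1))) t := by
      have hp := (((Real.hasDerivAt_sinh t).const_mul y).mul (cosh_mul_deriv s t)).neg
      have hq := (sinh_mul_deriv s t).const_mul s
      exact hp.sub hq
    have h4 := (exp_deriv_aux (y := y) t).mul hg
    refine h4.congr_deriv ?_
    simp only [hf']
    ring
  have htend : Tendsto (fun t => Real.exp (-(y * Real.cosh t)) *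
      (-(y * Real.sinh t * Real.cosh (s * t)) - s * Real.sinh (s * t))) atTop (𝓝 0) := by
    apply tendsto_aux hy (C := y + |s|) (c := 1 + |s|)
    intro t ht
    have h1 : |Real.sinh t| ≤ Real.exp t := by
      have := abs_sinh_le_exp_abs t; rwa [abs_of_nonneg ht] at this
    have h2 : |Real.sinh (s*t)| ≤ Real.exp (|s| * t) := by
      have := abs_sinh_le_exp_abs (s*t); rwa [abs_mul, abs_of_nonneg ht] at this
    have h3 : Real.cosh (s*t) ≤ Real.exp (|s| * t) := by
      have := cosh_le_exp_abs (s*t); rwa [abs_mul, abs_of_nonneg ht] at this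
    have h4 : (0:ℝ) < Real.cosh (s*t) := Real.cosh_pos _
    have h6 : Real.exp t * Real.exp (|s| * t) = Real.exp ((1 + |s|) * t) := by
      rw [← Real.exp_add]; congr 1; ring
    have h5 : Real.exp (|s| * t) ≤ Real.exp ((1 + |s|) * t) := by
      apply Real.exp_le_exp.2; nlinarith
    refine (abs_sub _ _).trans ?_
    rw [abs_neg, abs_mul, abs_mul, abs_mul, abs_of_pos h4, abs_of_pos hy]
    nlinarith [abs_nonneg (Real.sinh t), abs_nonneg (Real.sinh (s*t)), abs_nonneg s,
      Real.exp_pos ((1+|s|)*t), Real.exp_pos t,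
      mul_le_mul h1 h3 (Real.cosh_pos (s*t)).le (Real.exp_pos t).le,
      mul_le_mul_of_nonneg_left (h2.trans h5) (abs_nonneg s),
      mul_le_mul_of_nonneg_left (mul_le_mul h1 h3 h4.le (Real.exp_pos t).le) hy.le]
  have hFTC := integral_Ioi_of_hasDerivAt_of_tendsto' (a := 0) (fun t ht => hderiv t ht) hint htend
  have hF0 : Real.exp (-(y * Real.cosh 0)) *
      (-(y * Real.sinh 0 * Real.cosh (s * 0)) - s * Real.sinh (s * 0)) = 0 := by
    simp
  rw [hF0, sub_zero] at hFTC
  have hpt : ∀ t : ℝ, f' t =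
      y^2 * (Real.cosh t ^ 2 * (Real.exp (-(y * Real.cosh t)) * Real.cosh (s * t)))
      - y * (Real.cosh t ^ 1 * (Real.exp (-(y * Real.cosh t)) * Real.cosh (s * t)))
      - (y^2 + s^2) * (Real.cosh t ^ 0 * (Real.exp (-(y * Real.cosh t)) * Real.cosh (s * t))) := by
    intro t
    simp only [hf', Real.sinh_sq]
    ring
  have hA : IntegrableOn (fun t => y^2 * (Real.cosh t ^ 2 * (Real.exp (-(y * Real.cosh t)) * Real.cosh (s * t)))) (Ioi (0:ℝ)) := (integrableJ 2 s hy).const_mul _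
  have hB : IntegrableOn (fun t => y * (Real.cosh t ^ 1 * (Real.exp (-(y * Real.cosh t)) * Real.cosh (s * t)))) (Ioi (0:ℝ)) := (integrableJ 1 s hy).const_mul _
  have hC : IntegrableOn (fun t => (y^2+s^2) * (Real.cosh t ^ 0 * (Real.exp (-(y * Real.cosh t)) * Real.cosh (s * t)))) (Ioi (0:ℝ)) := (integrableJ 0 s hy).const_mul _
  have hAB : IntegrableOn (fun t => y^2 * (Real.cosh t ^ 2 * (Real.exp (-(y * Real.cosh t)) * Real.cosh (s * t))) - y * (Real.cosh t ^ 1 * (Real.exp (-(y * Real.cosh t)) * Real.cosh (s * t)))) (Ioi (0:ℝ)) := hA.sub hB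
  have hsplit : (∫ t in Ioi (0:ℝ), f' t)
      = y^2 * J 2 s y - y * J 1 s y - (y^2 + s^2) * J 0 s y := by
    rw [integral_congr_ae (Eventually.of_forall hpt),
      integral_sub hAB hC, integral_sub hA hB, integral_const_mul, integral_const_mul,
      integral_const_mul]
    rfl
  rw [hsplit] at hFTC
  exact hFTC

lemma Jneg (s y : ℝ) : J 0 (s - 1) y = J 0 (1 - s) y := by
  unfold J
  apply integral_congr_ae
  filter_upwards with t
  rw [show (s-1)*t = -((1-s)*t) by ring, Real.cosh_neg]

lemma besselK_eq_J (a x : ℝ) : besselK a x = J 0 a x := by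
  simp only [besselK, J, pow_zero, one_mul]

/-- for `s ∈ (0,1)` and `d_s = 2^{1−2s}·Γ(1−s)/Γ(s)`, for every `y > 0`
`ψ_s` is twice differentiable at `y` and
`−ψ_s''(y) + ψ_s(y) = d_s·(2s−1)·y^{2(s−1)}·ψ_{1−s}(y)`. -/
theorem psi_second_order_eq_of_lt_one (s : ℝ) (hs0 : 0 < s) (hs1 : s < 1)
    (d : ℝ) (hd : d = (2 : ℝ) ^ (1 - 2 * s) * Real.Gamma (1 - s) / Real.Gamma s) :
    ∀ y : ℝ, 0 < y →
      DifferentiableAt ℝ (psi s) y ∧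
      DifferentiableAt ℝ (deriv (psi s)) y ∧
      -(deriv (deriv (psi s)) y) + psi s y
        = d * (2 * s - 1) * y ^ (2 * (s - 1)) * psi (1 - s) y := by
  intro y hy
  have hy0 : y ≠ 0 := hy.ne'
  set c : ℝ := (2 : ℝ) ^ (1 - s) / Real.Gamma s with hc
  set c' : ℝ := (2 : ℝ) ^ (1 - (1 - s)) / Real.Gamma (1 - s) with hc'
  -- psi equals the smooth formula on Ioi 0
  have hval : ∀ x : ℝ, 0 < x → psi s x = c * x ^ s * J 0 s x := by
    intro x hx
    rw [psi, if_neg hx.ne', abs_of_pos hx, besselK_eq_J]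
  have hval' : ∀ x : ℝ, 0 < x → psi (1-s) x = c' * x ^ (1-s) * J 0 (1-s) x := by
    intro x hx
    rw [psi, if_neg hx.ne', abs_of_pos hx, besselK_eq_J]
  have hpsiEq : ∀ x : ℝ, 0 < x → psi s =ᶠ[𝓝 x] fun u => c * u ^ s * J 0 s u := by
    intro x hx
    filter_upwards [Ioi_mem_nhds hx] with z hz
    exact hval z hz
  -- first derivative
  set D1 : ℝ → ℝ := fun x => c * (s * x ^ (s - 1)) * J 0 s x + c * x ^ s * -(J 1 s x) with hD1def
  have hP : ∀ x : ℝ, 0 < x → HasDerivAt (fun u => c * u ^ s * J 0 s u) (D1 x) x := by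
    intro x hx
    exact ((Real.hasDerivAt_rpow_const (Or.inl hx.ne')).const_mul c).mul (hasDerivJ 0 s hx)
  have hpsiD : ∀ x : ℝ, 0 < x → HasDerivAt (psi s) (D1 x) x := by
    intro x hx
    exact (hP x hx).congr_of_eventuallyEq (hpsiEq x hx)
  have hdd : deriv (psi s) =ᶠ[𝓝 y] D1 := by
    filter_upwards [Ioi_mem_nhds hy] with z hz
    exact (hpsiD z hz).deriv
  -- second derivative
  have hT1 : HasDerivAt (fun x => c * (s * x ^ (s - 1)) * J 0 s x)
      (c * (s * ((s-1) * y ^ (s-1-1))) * J 0 s y + c * (s * y ^ (s-1)) * -(J 1 s y)) y :=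
    (((Real.hasDerivAt_rpow_const (Or.inl hy0)).const_mul s).const_mul c).mul (hasDerivJ 0 s hy)
  have hT2 : HasDerivAt (fun x => c * x ^ s * -(J 1 s x))
      (c * (s * y ^ (s-1)) * -(J 1 s y) + c * y ^ s * -(-(J 2 s y))) y :=
    ((Real.hasDerivAt_rpow_const (Or.inl hy0)).const_mul c).mul (hasDerivJ 1 s hy).neg
  set E : ℝ := c*s*(s-1)*y^(s-2)*(J 0 s y) - 2*c*s*y^(s-1)*(J 1 s y) + c*y^s*(J 2 s y) with hE
  have hD1deriv : HasDerivAt D1 E y := by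
    have h := hT1.add hT2
    refine h.congr_deriv ?_
    rw [hE, show s-1-1 = s-2 by ring]
    ring
  have hderivpsi2 : HasDerivAt (deriv (psi s)) E y :=
    hD1deriv.congr_of_eventuallyEq hdd
  have hdd2 : deriv (deriv (psi s)) y = E := by
    rw [hdd.deriv_eq, hD1deriv.deriv]
  refine ⟨(hpsiD y hy).differentiableAt, hderivpsi2.differentiableAt, ?_⟩
  -- algebra
  have hG1 : 0 < Real.Gamma s := Real.Gamma_pos_of_pos hs0
  have hG2 : 0 < Real.Gamma (1-s) := Real.Gamma_pos_of_pos (by linarith)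
  have hdc : d * c' = c := by
    rw [hd, hc', hc]
    have h2s : (2:ℝ)^(1-2*s) * (2:ℝ)^(1-(1-s)) = (2:ℝ)^(1-s) := by
      rw [← Real.rpow_add two_pos]; congr 1; ring
    field_simp
    rw [← h2s]
  have r1 : y ^ (s-1) * y = y ^ s := by
    have : y ^ (s-1) * y ^ (1:ℝ) = y ^ s := by
      rw [← Real.rpow_add hy]; norm_num
    rwa [Real.rpow_one] at this
  have r2 : y ^ (s-2) * (y * y) = y ^ s := by
    have h22 : y ^ (2:ℝ) = y * y := by
      rw [show (2:ℝ) = ((2:ℕ):ℝ) by norm_num, Real.rpow_natCast]; ring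
    have : y ^ (s-2) * y ^ (2:ℝ) = y ^ s := by
      rw [← Real.rpow_add hy]; norm_num
    rwa [h22] at this
  have hpowsum : y ^ (2*(s-1)) * y ^ (1-s) = y ^ (s-1) := by
    rw [← Real.rpow_add hy]; congr 1; ring
  have e1' : y * J 1 s y = s * J 0 s y + y * J 0 (1-s) y := by
    rw [rec1 hy s, Jneg]
    field_simp
  have e2' : y^2 * J 2 s y = y * J 1 s y + (y^2 + s^2) * J 0 s y := by
    linarith [odeJ hy s]
  have hR : d * (2*s-1) * y^(2*(s-1)) * psi (1-s) y = c * (2*s-1) * y^(s-1) * J 0 (1-s) y := by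
    rw [hval' y hy]
    calc d * (2*s-1) * y^(2*(s-1)) * (c' * y^(1-s) * J 0 (1-s) y)
        = (d * c') * (2*s-1) * (y^(2*(s-1)) * y^(1-s)) * J 0 (1-s) y := by ring
      _ = c * (2*s-1) * y^(s-1) * J 0 (1-s) y := by rw [hdc, hpowsum]
  have hL : -(E) + c * y^s * J 0 s y = c * (2*s-1) * y^(s-1) * J 0 (1-s) y := by
    apply mul_left_cancel₀ (mul_ne_zero hy0 hy0)
    rw [hE]
    linear_combination (-(c*s*(s-1)*(J 0 s y))) * r2
      + (2*c*s*(J 1 s y)*y - c*(2*s-1)*y*(J 0 (1-s) y)) * r1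
      + (-(c*(y^s))) * e2' + (c*(y^s)*(2*s-1)) * e1'
  rw [hdd2, hval y hy, show d * (2*s-1) = d * (2*s-1) from rfl]
  rw [show -(E) + c * y ^ s * J 0 s y = c * (2*s-1) * y^(s-1) * J 0 (1-s) y from hL]
  rw [show d * (2 * s - 1) * y ^ (2 * (s - 1)) * psi (1 - s) y
      = c * (2*s-1) * y^(s-1) * J 0 (1-s) y from by rw [← hR]]
end

section
/- Let s > 0 be non-integer, let 𝔟 = 1 − 2(s − ⌊s⌋), and let ⌈s⌉ = ⌊s⌋ + 1. Then the ⌈s⌉-fold iterate (D_𝔟 + 1)^{⌈s⌉} ψ_s, computed pointwise on (0, ∞), vanishes identically: ((D_𝔟 + 1)^{⌈s⌉} ψ_s)(y) = 0 for every y > 0. -/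
open MeasureTheory Real Filter Set

/-- The operator `f ↦ D_b f + λ·f`, where `(D_b f)(y) = −f''(y) − (b/y)·f'(y)`. -/
noncomputable def DLam (b lam : ℝ) (f : ℝ → ℝ) : ℝ → ℝ :=
  fun y => -(deriv (deriv f) y) - b / y * deriv f y + lam * f y

/-- The `n`-fold iterate `(D_b + λ)^n f`, computed pointwise. -/
noncomputable def DLamIter (b lam : ℝ) (n : ℕ) (f : ℝ → ℝ) : ℝ → ℝ :=
  (DLam b lam)^[n] f


lemma master_ineq (y c t : ℝ) (hy : 0 < y) (ht : 0 ≤ t) :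
    c * t - y * Real.cosh t ≤ 8 * (c + 1) ^ 2 / y - t := by
  have h1 : (1 : ℝ) + t / 2 ≤ Real.exp (t / 2) := by linarith [Real.add_one_le_exp (t / 2)]
  have h2 : Real.exp (t / 2) * Real.exp (t / 2) = Real.exp t := by
    rw [← Real.exp_add]; ring_nf
  have h3 : 1 - t ≤ Real.exp (-t) := by linarith [Real.add_one_le_exp (-t)]
  have hc : Real.cosh t = (Real.exp t + Real.exp (-t)) / 2 := Real.cosh_eq t
  have hcb : 1 + t ^ 2 / 8 ≤ Real.cosh t := by nlinarith [Real.exp_pos (t/2)]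
  have hd : 8 * (c + 1) ^ 2 / y * y = 8 * (c + 1) ^ 2 := div_mul_cancel₀ _ hy.ne'
  rw [sub_le_sub_iff, ← sub_le_iff_le_add', sub_le_iff_le_add]
  nlinarith [sq_nonneg (y * t - 4 * (c + 1)), mul_le_mul_of_nonneg_left hcb hy.le, hd,
    mul_pos hy hy]


lemma cosh_le_exp' (t : ℝ) (ht : 0 ≤ t) : Real.cosh t ≤ Real.exp t := by
  rw [Real.cosh_eq]
  have : Real.exp (-t) ≤ Real.exp t := Real.exp_le_exp.2 (by linarith)
  linarith

lemma cosh_mul_le_exp (a t : ℝ) (ht : 0 ≤ t) : Real.cosh (a * t) ≤ Real.exp (|a| * t) := by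
  have h1 : Real.cosh (a * t) = Real.cosh |a * t| := (Real.cosh_abs _).symm
  rw [h1, abs_mul, abs_of_nonneg ht]
  exact cosh_le_exp' _ (by positivity)

lemma abs_sinh_le_exp (a t : ℝ) (ht : 0 ≤ t) : |Real.sinh (a * t)| ≤ Real.exp (|a| * t) := by
  rw [Real.abs_sinh]
  calc Real.sinh |a * t| ≤ Real.cosh |a * t| := (Real.sinh_lt_cosh _).le
    _ ≤ Real.exp |a * t| := cosh_le_exp' _ (abs_nonneg _)
    _ = Real.exp (|a| * t) := by rw [abs_mul, abs_of_nonneg ht]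

lemma integrand_bound (n : ℕ) (a y t : ℝ) (hy : 0 < y) (ht : 0 ≤ t) :
    Real.cosh t ^ n * Real.exp (-(y * Real.cosh t)) * Real.cosh (a * t)
      ≤ Real.exp (8 * ((n + |a|) + 1) ^ 2 / y) * Real.exp (-t) := by
  have h1 : Real.cosh t ^ n ≤ Real.exp ((n : ℝ) * t) := by
    rw [Real.exp_nat_mul]
    exact pow_le_pow_left₀ (Real.cosh_pos t).le (cosh_le_exp' t ht) n
  have h2 := cosh_mul_le_exp a t ht
  calc Real.cosh t ^ n * Real.exp (-(y * Real.cosh t)) * Real.cosh (a * t)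
      ≤ Real.exp ((n : ℝ) * t) * Real.exp (-(y * Real.cosh t)) * Real.exp (|a| * t) := by
        apply mul_le_mul (mul_le_mul h1 le_rfl (Real.exp_pos _).le (Real.exp_pos _).le) h2
          (Real.cosh_pos _).le (by positivity)
    _ = Real.exp (((n : ℝ) + |a|) * t - y * Real.cosh t) := by
        rw [← Real.exp_add, ← Real.exp_add]; ring_nf
    _ ≤ Real.exp (8 * ((n + |a|) + 1) ^ 2 / y - t) := Real.exp_le_exp.2 (master_ineq y _ t hy ht)
    _ = _ := by rw [← Real.exp_add]; ring_nf

noncomputable def IK (n : ℕ) (a y : ℝ) : ℝ :=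
  ∫ t in Set.Ioi (0 : ℝ), Real.cosh t ^ n * Real.exp (-(y * Real.cosh t)) * Real.cosh (a * t)

lemma continuous_IK_integrand (n : ℕ) (a y : ℝ) :
    Continuous (fun t => Real.cosh t ^ n * Real.exp (-(y * Real.cosh t)) * Real.cosh (a * t)) := by
  fun_prop

lemma integrableOn_IK (n : ℕ) (a y : ℝ) (hy : 0 < y) :
    IntegrableOn (fun t => Real.cosh t ^ n * Real.exp (-(y * Real.cosh t)) * Real.cosh (a * t))
      (Ioi 0) := by
  set C := Real.exp (8 * ((n + |a|) + 1) ^ 2 / y)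
  have hg : IntegrableOn (fun t => C * Real.exp (-1 * t)) (Ioi 0) :=
    (exp_neg_integrableOn_Ioi 0 one_pos).const_mul C
  refine hg.mono' ((continuous_IK_integrand n a y).aestronglyMeasurable.restrict) ?_
  rw [ae_restrict_iff' measurableSet_Ioi]
  filter_upwards with t ht
  have ht' : (0:ℝ) ≤ t := (le_of_lt ht)
  rw [Real.norm_eq_abs, abs_of_nonneg (by positivity)]
  simpa [neg_one_mul] using integrand_bound n a y t hy ht'

lemma hasDerivAt_IK (n : ℕ) (a y : ℝ) (hy : 0 < y) :
    HasDerivAt (fun x => IK n a x) (-(IK (n + 1) a y)) y := by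
  have key := hasDerivAt_integral_of_dominated_loc_of_deriv_le (μ := volume.restrict (Ioi 0))
    (F := fun x t => Real.cosh t ^ n * Real.exp (-(x * Real.cosh t)) * Real.cosh (a * t))
    (F' := fun x t => -(Real.cosh t ^ (n+1) * Real.exp (-(x * Real.cosh t)) * Real.cosh (a * t)))
    (x₀ := y)
    (bound := fun t => Real.cosh t ^ (n+1) * Real.exp (-(y/2 * Real.cosh t)) * Real.cosh (a * t))
    (Metric.ball_mem_nhds y (half_pos hy))
    (Eventually.of_forall fun x => (continuous_IK_integrand n a x).aestronglyMeasurable.restrict)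
    (integrableOn_IK n a y hy)
    (((continuous_IK_integrand (n+1) a y).neg).aestronglyMeasurable.restrict)
    ?_ ((integrableOn_IK (n+1) a (y/2) (half_pos hy))) ?_
  · have : (∫ t in Ioi (0:ℝ), -(Real.cosh t ^ (n+1) * Real.exp (-(y * Real.cosh t)) * Real.cosh (a * t)))
        = -(IK (n+1) a y) := by
      rw [integral_neg]; rfl
    rw [← this]
    exact key.2
  · rw [ae_restrict_iff' measurableSet_Ioi]
    filter_upwards with t ht x hx
    have hxy : y/2 ≤ x := by
      have := abs_lt.1 (mem_ball_iff_norm.1 hx); linarith [this.1]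
    rw [norm_neg, Real.norm_eq_abs, abs_of_nonneg (by positivity)]
    have : Real.exp (-(x * Real.cosh t)) ≤ Real.exp (-(y/2 * Real.cosh t)) := by
      apply Real.exp_le_exp.2; have := (Real.cosh_pos t).le; nlinarith
    have h2 : (0:ℝ) ≤ Real.cosh t ^ (n+1) := by positivity
    have h3 : (0:ℝ) ≤ Real.cosh (a*t) := (Real.cosh_pos _).le
    nlinarith [mul_le_mul_of_nonneg_left this h2, Real.exp_pos (-(y/2*Real.cosh t))]
  · rw [ae_restrict_iff' measurableSet_Ioi]
    filter_upwards with t ht x hx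
    have hd : HasDerivAt (fun x : ℝ => Real.exp (-(x * Real.cosh t)))
        (-Real.cosh t * Real.exp (-(x * Real.cosh t))) x := by
      have h1 : HasDerivAt (fun x : ℝ => -(x * Real.cosh t)) (-Real.cosh t) x := by
        exact (((hasDerivAt_id x).mul_const (Real.cosh t)).neg).congr_deriv (by simp)
      simpa [mul_comm] using h1.exp
    have := (hd.const_mul (Real.cosh t ^ n)).mul_const (Real.cosh (a * t))
    refine this.congr_deriv ?_
    ring

lemma abs_sinh_le_exp' (t : ℝ) (ht : 0 ≤ t) : |Real.sinh t| ≤ Real.exp t := by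
  rw [Real.abs_sinh, abs_of_nonneg ht]
  calc Real.sinh t ≤ Real.cosh t := (Real.sinh_lt_cosh _).le
    _ ≤ Real.exp t := by rw [Real.cosh_eq]; linarith [Real.exp_le_exp.2 (neg_le_self ht)]

lemma ftc_zero (y : ℝ) (hy : 0 < y) (w w' : ℝ → ℝ) (hw : ∀ t, HasDerivAt w (w' t) t)
    (hwc : Continuous w') (h0 : w 0 = 0) (A C : ℝ) (hA : 0 ≤ A)
    (hb : ∀ t, 0 ≤ t → |w t| ≤ A * Real.exp (C * t))
    (hb' : ∀ t, 0 ≤ t → |w' t| ≤ A * Real.exp (C * t)) :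
    ∫ t in Ioi (0:ℝ),
      Real.exp (-(y * Real.cosh t)) * (w' t - y * Real.sinh t * w t) = 0 := by
  set g : ℝ → ℝ := fun t => Real.exp (-(y * Real.cosh t)) * w t with hgdef
  set g' : ℝ → ℝ := fun t =>
    Real.exp (-(y * Real.cosh t)) * (w' t - y * Real.sinh t * w t) with hg'def
  have hgd : ∀ t, HasDerivAt g (g' t) t := by
    intro t
    have h2 : HasDerivAt (fun t : ℝ => -(y * Real.cosh t)) (-(y * Real.sinh t)) t := by
      exact ((Real.hasDerivAt_cosh t).const_mul y).neg
    have h1 : HasDerivAt (fun t : ℝ => Real.exp (-(y * Real.cosh t)))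
        (-(y * Real.sinh t) * Real.exp (-(y * Real.cosh t))) t := by
      simpa [mul_comm] using h2.exp
    have := h1.mul (hw t)
    refine this.congr_deriv ?_
    simp only [hg'def]; ring
  have hwcont : Continuous w := by
    rw [continuous_iff_continuousAt]; exact fun t => (hw t).continuousAt
  -- bound on g'
  have hbd : ∀ t, 0 ≤ t → |g' t| ≤ (A * (1 + y) * Real.exp (8 * (C + 2) ^ 2 / y)) * Real.exp (-t) := by
    intro t ht
    have he : (0:ℝ) < Real.exp (-(y * Real.cosh t)) := Real.exp_pos _
    have h1 : |g' t| ≤ Real.exp (-(y * Real.cosh t)) * (|w' t| + y * |Real.sinh t| * |w t|) := by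
      simp only [hg'def, abs_mul, abs_of_pos he]
      gcongr
      calc |w' t - y * Real.sinh t * w t| ≤ |w' t| + |y * Real.sinh t * w t| := abs_sub _ _
        _ = |w' t| + y * |Real.sinh t| * |w t| := by
            rw [abs_mul, abs_mul, abs_of_pos hy]
    have h2 : |w' t| + y * |Real.sinh t| * |w t| ≤ A * (1 + y) * Real.exp ((C+1) * t) := by
      have s1 := hb t ht
      have s2 := hb' t ht
      have s3 := abs_sinh_le_exp' t ht
      have e1 : Real.exp (C * t) ≤ Real.exp ((C+1)*t) := Real.exp_le_exp.2 (by nlinarith)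
      have e2 : Real.exp (C * t) * Real.exp t = Real.exp ((C+1)*t) := by
        rw [← Real.exp_add]; ring_nf
      have hwt : (0:ℝ) ≤ |w t| := abs_nonneg _
      have m1 : |w' t| ≤ A * Real.exp ((C+1)*t) := s2.trans (mul_le_mul_of_nonneg_left e1 hA)
      have m0 : |Real.sinh t| * |w t| ≤ Real.exp t * (A * Real.exp (C*t)) :=
        mul_le_mul s3 s1 hwt (Real.exp_pos t).le
      have m2 : y * |Real.sinh t| * |w t| ≤ y * (A * Real.exp ((C+1)*t)) := by
        calc y * |Real.sinh t| * |w t| = y * (|Real.sinh t| * |w t|) := by ring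
          _ ≤ y * (Real.exp t * (A * Real.exp (C*t))) := mul_le_mul_of_nonneg_left m0 hy.le
          _ = y * (A * Real.exp ((C+1)*t)) := by rw [← e2]; ring
      nlinarith [m1, m2]
    calc |g' t| ≤ Real.exp (-(y * Real.cosh t)) * (A * (1+y) * Real.exp ((C+1)*t)) := by
          refine h1.trans ?_; gcongr
      _ = A * (1+y) * Real.exp ((C+1)*t - y * Real.cosh t) := by
          rw [sub_eq_add_neg, Real.exp_add]; ring
      _ ≤ A * (1+y) * (Real.exp (8 * (C+2)^2 / y) * Real.exp (-t)) := by
          rw [← Real.exp_add]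
          have h : (C+1)*t - y*Real.cosh t ≤ 8*(C+2)^2/y + -t := by
            have h := master_ineq y (C+1) t hy ht
            ring_nf at h ⊢; linarith
          exact mul_le_mul_of_nonneg_left (Real.exp_le_exp.2 h) (by positivity)
      _ = _ := by ring
  have hint : IntegrableOn g' (Ioi 0) := by
    have hgc : Continuous g' := by fun_prop
    have hmono : IntegrableOn (fun t => (A * (1 + y) * Real.exp (8 * (C + 2) ^ 2 / y)) * Real.exp (-1 * t)) (Ioi 0) :=
      (exp_neg_integrableOn_Ioi 0 one_pos).const_mul _
    refine hmono.mono' hgc.aestronglyMeasurable.restrict ?_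
    rw [ae_restrict_iff' measurableSet_Ioi]
    filter_upwards with t ht
    rw [Real.norm_eq_abs]
    simpa [neg_one_mul] using hbd t ht.le
  have htend : Tendsto g atTop (nhds 0) := by
    have hb0 : ∀ᶠ t in atTop, |g t| ≤ (A * Real.exp (8 * (C + 1) ^ 2 / y)) * Real.exp (-t) := by
      filter_upwards [eventually_ge_atTop (0:ℝ)] with t ht
      have h1 : |g t| = Real.exp (-(y * Real.cosh t)) * |w t| := by
        simp only [hgdef, abs_mul, abs_of_pos (Real.exp_pos _)]
      rw [h1]
      calc Real.exp (-(y * Real.cosh t)) * |w t|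
          ≤ Real.exp (-(y * Real.cosh t)) * (A * Real.exp (C * t)) := by gcongr; exact hb t ht
        _ = A * Real.exp (C * t - y * Real.cosh t) := by rw [sub_eq_add_neg, Real.exp_add]; ring
        _ ≤ A * Real.exp (8 * (C+1)^2 / y - t) :=
            mul_le_mul_of_nonneg_left (Real.exp_le_exp.2 (master_ineq y C t hy ht)) hA
        _ = _ := by rw [sub_eq_add_neg, Real.exp_add]; ring
    have h2 : Tendsto (fun t => (A * Real.exp (8 * (C + 1) ^ 2 / y)) * Real.exp (-t)) atTop (nhds 0) := by
      rw [show (0:ℝ) = (A * Real.exp (8 * (C + 1) ^ 2 / y)) * 0 by ring]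
      exact (Real.tendsto_exp_neg_atTop_nhds_zero).const_mul _
    have h3 : Tendsto (fun t => |g t|) atTop (nhds 0) :=
      squeeze_zero' (Eventually.of_forall fun t => abs_nonneg _) hb0 h2
    exact (tendsto_zero_iff_abs_tendsto_zero _).2 h3
  have := integral_Ioi_of_hasDerivAt_of_tendsto' (a := 0) (f := g) (f' := g')
    (fun x _ => hgd x) hint htend
  rw [this]
  simp [hgdef, h0]

lemma hasDerivAt_sinh_mul (a t : ℝ) : HasDerivAt (fun t => Real.sinh (a * t)) (a * Real.cosh (a * t)) t := by
  have h : HasDerivAt (fun t : ℝ => a * t) a t := by simpa using (hasDerivAt_id t).const_mul a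
  simpa [mul_comm] using h.sinh

lemma hasDerivAt_cosh_mul (a t : ℝ) : HasDerivAt (fun t => Real.cosh (a * t)) (a * Real.sinh (a * t)) t := by
  have h : HasDerivAt (fun t : ℝ => a * t) a t := by simpa using (hasDerivAt_id t).const_mul a
  simpa [mul_comm] using h.cosh

/-- Recurrence: `-a K_a + y L_a - y K_{a-1} = 0`. -/
lemma recA (a y : ℝ) (hy : 0 < y) :
    -a * IK 0 a y + y * IK 1 a y - y * IK 0 (a - 1) y = 0 := by
  have h0 := integrableOn_IK 0 a y hy
  have h1 := integrableOn_IK 1 a y hy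
  have h2 := integrableOn_IK 0 (a - 1) y hy
  have hcomb : -a * IK 0 a y + y * IK 1 a y - y * IK 0 (a - 1) y
      = ∫ t in Ioi (0:ℝ),
          (-a * (Real.cosh t ^ 0 * Real.exp (-(y * Real.cosh t)) * Real.cosh (a * t))
          + y * (Real.cosh t ^ 1 * Real.exp (-(y * Real.cosh t)) * Real.cosh (a * t))
          - y * (Real.cosh t ^ 0 * Real.exp (-(y * Real.cosh t)) * Real.cosh ((a - 1) * t))) := by
    rw [integral_sub (by exact (h0.const_mul _).add (h1.const_mul _)) (h2.const_mul _),
      integral_add (h0.const_mul _) (h1.const_mul _),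
      integral_const_mul, integral_const_mul, integral_const_mul]
    rfl
  rw [hcomb]
  have hpt : ∀ t : ℝ,
      (-a * (Real.cosh t ^ 0 * Real.exp (-(y * Real.cosh t)) * Real.cosh (a * t))
          + y * (Real.cosh t ^ 1 * Real.exp (-(y * Real.cosh t)) * Real.cosh (a * t))
          - y * (Real.cosh t ^ 0 * Real.exp (-(y * Real.cosh t)) * Real.cosh ((a - 1) * t)))
      = Real.exp (-(y * Real.cosh t)) *
          ((-(a * Real.cosh (a * t))) - y * Real.sinh t * (-Real.sinh (a * t))) := by
    intro t
    have : (a - 1) * t = a * t - t := by ring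
    rw [this, Real.cosh_sub]
    ring
  rw [show (fun t => (-a * (Real.cosh t ^ 0 * Real.exp (-(y * Real.cosh t)) * Real.cosh (a * t))
          + y * (Real.cosh t ^ 1 * Real.exp (-(y * Real.cosh t)) * Real.cosh (a * t))
          - y * (Real.cosh t ^ 0 * Real.exp (-(y * Real.cosh t)) * Real.cosh ((a - 1) * t))))
      = fun t => Real.exp (-(y * Real.cosh t)) *
          ((-(a * Real.cosh (a * t))) - y * Real.sinh t * (-Real.sinh (a * t))) from funext hpt]
  exact ftc_zero y hy (fun t => -Real.sinh (a * t)) (fun t => -(a * Real.cosh (a * t)))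
    (fun t => (hasDerivAt_sinh_mul a t).neg) (by fun_prop) (by simp)
    (abs a + 1) (abs a) (by positivity)
    (fun t ht => by
      rw [abs_neg]
      calc |Real.sinh (a*t)| ≤ Real.exp (abs a * t) := abs_sinh_le_exp a t ht
        _ ≤ (abs a + 1) * Real.exp (abs a * t) := by nlinarith [Real.exp_pos (abs a * t), abs_nonneg a])
    (fun t ht => by
      rw [abs_neg, abs_mul, abs_of_nonneg (Real.cosh_pos _).le]
      calc abs a * Real.cosh (a*t) ≤ abs a * Real.exp (abs a * t) :=
            mul_le_mul_of_nonneg_left (cosh_mul_le_exp a t ht) (abs_nonneg a)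
        _ ≤ (abs a + 1) * Real.exp (abs a * t) := by nlinarith [Real.exp_pos (abs a * t)])

/-- ODE: `y² M_a - y L_a - (y² + a²) K_a = 0`. -/
lemma odeC (a y : ℝ) (hy : 0 < y) :
    y * y * IK 2 a y - y * IK 1 a y - (y * y + a ^ 2) * IK 0 a y = 0 := by
  have h0 := integrableOn_IK 0 a y hy
  have h1 := integrableOn_IK 1 a y hy
  have h2 := integrableOn_IK 2 a y hy
  have hcomb : y * y * IK 2 a y - y * IK 1 a y - (y * y + a ^ 2) * IK 0 a y
      = ∫ t in Ioi (0:ℝ),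
          (y * y * (Real.cosh t ^ 2 * Real.exp (-(y * Real.cosh t)) * Real.cosh (a * t))
          - y * (Real.cosh t ^ 1 * Real.exp (-(y * Real.cosh t)) * Real.cosh (a * t))
          - (y * y + a ^ 2) * (Real.cosh t ^ 0 * Real.exp (-(y * Real.cosh t)) * Real.cosh (a * t))) := by
    rw [integral_sub (by exact (h2.const_mul _).sub (h1.const_mul _)) (h0.const_mul _),
      integral_sub (h2.const_mul _) (h1.const_mul _),
      integral_const_mul, integral_const_mul, integral_const_mul]
    rfl
  rw [hcomb]
  have hpt : ∀ t : ℝ,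
      (y * y * (Real.cosh t ^ 2 * Real.exp (-(y * Real.cosh t)) * Real.cosh (a * t))
          - y * (Real.cosh t ^ 1 * Real.exp (-(y * Real.cosh t)) * Real.cosh (a * t))
          - (y * y + a ^ 2) * (Real.cosh t ^ 0 * Real.exp (-(y * Real.cosh t)) * Real.cosh (a * t)))
      = Real.exp (-(y * Real.cosh t)) *
          ((-(y * (Real.cosh t * Real.cosh (a * t))) - y * (Real.sinh t * (a * Real.sinh (a * t)))
              - a * (a * Real.cosh (a * t)))
            - y * Real.sinh t * (-(y * (Real.sinh t * Real.cosh (a * t))) - a * Real.sinh (a * t))) := by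
    intro t
    have hs : Real.sinh t ^ 2 = Real.cosh t ^ 2 - 1 := by
      have := Real.cosh_sq_sub_sinh_sq t; linarith
    linear_combination (-(y * y * Real.cosh (a*t) * Real.exp (-(y * Real.cosh t)))) * hs
  rw [show (fun t => (y * y * (Real.cosh t ^ 2 * Real.exp (-(y * Real.cosh t)) * Real.cosh (a * t))
          - y * (Real.cosh t ^ 1 * Real.exp (-(y * Real.cosh t)) * Real.cosh (a * t))
          - (y * y + a ^ 2) * (Real.cosh t ^ 0 * Real.exp (-(y * Real.cosh t)) * Real.cosh (a * t))))
      = fun t => Real.exp (-(y * Real.cosh t)) *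
          ((-(y * (Real.cosh t * Real.cosh (a * t))) - y * (Real.sinh t * (a * Real.sinh (a * t)))
              - a * (a * Real.cosh (a * t)))
            - y * Real.sinh t * (-(y * (Real.sinh t * Real.cosh (a * t))) - a * Real.sinh (a * t)))
      from funext hpt]
  have hwD : ∀ t, HasDerivAt
      (fun t => -(y * (Real.sinh t * Real.cosh (a * t))) - a * Real.sinh (a * t))
      (-(y * (Real.cosh t * Real.cosh (a * t))) - y * (Real.sinh t * (a * Real.sinh (a * t)))
        - a * (a * Real.cosh (a * t))) t := by
    intro t
    have h1 := (((Real.hasDerivAt_sinh t).mul (hasDerivAt_cosh_mul a t)).const_mul y).neg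
    have h2 := (hasDerivAt_sinh_mul a t).const_mul a
    have := h1.sub h2
    refine this.congr_deriv ?_
    ring
  set A : ℝ := y + y * abs a + abs a ^ 2 + abs a + 1 with hA
  refine ftc_zero y hy _ _ hwD (by fun_prop) (by simp) A (abs a + 1)
    (by positivity) (fun t ht => ?_) (fun t ht => ?_)
  · have c2 := cosh_mul_le_exp a t ht
    have s1 := abs_sinh_le_exp' t ht
    have s2 := abs_sinh_le_exp a t ht
    have e1 : Real.exp t * Real.exp (abs a * t) = Real.exp ((abs a + 1) * t) := by
      rw [← Real.exp_add]; ring_nf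
    have e2 : Real.exp (abs a * t) ≤ Real.exp ((abs a + 1) * t) :=
      Real.exp_le_exp.2 (by nlinarith)
    have tri : |(-(y * (Real.sinh t * Real.cosh (a * t))) - a * Real.sinh (a * t))|
        ≤ y * (|Real.sinh t| * Real.cosh (a * t)) + abs a * |Real.sinh (a * t)| := by
      calc |(-(y * (Real.sinh t * Real.cosh (a * t))) - a * Real.sinh (a * t))|
          ≤ |y * (Real.sinh t * Real.cosh (a * t))| + |a * Real.sinh (a * t)| := by
            rw [← abs_neg (y * (Real.sinh t * Real.cosh (a * t)))] ; exact abs_sub _ _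
        _ = y * (|Real.sinh t| * Real.cosh (a * t)) + abs a * |Real.sinh (a * t)| := by
            rw [abs_mul, abs_mul, abs_mul, abs_of_pos hy,
              abs_of_nonneg (Real.cosh_pos (a*t)).le]
    have m1 : |Real.sinh t| * Real.cosh (a * t) ≤ Real.exp ((abs a + 1) * t) := by
      rw [← e1]
      exact mul_le_mul s1 c2 (Real.cosh_pos _).le (Real.exp_pos _).le
    have m2 : abs a * |Real.sinh (a * t)| ≤ abs a * Real.exp ((abs a + 1) * t) :=
      mul_le_mul_of_nonneg_left (s2.trans e2) (abs_nonneg a)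
    have h5 := mul_le_mul_of_nonneg_left m1 hy.le
    have hfin : (y + abs a) * Real.exp ((abs a + 1) * t) ≤ A * Real.exp ((abs a + 1) * t) := by
      apply mul_le_mul_of_nonneg_right _ (Real.exp_pos _).le
      nlinarith [abs_nonneg a, sq_nonneg (abs a), mul_nonneg hy.le (abs_nonneg a)]
    nlinarith [tri, h5, m2, hfin]
  · have c1 := cosh_le_exp' t ht
    have c2 := cosh_mul_le_exp a t ht
    have s1 := abs_sinh_le_exp' t ht
    have s2 := abs_sinh_le_exp a t ht
    have e1 : Real.exp t * Real.exp (abs a * t) = Real.exp ((abs a + 1) * t) := by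
      rw [← Real.exp_add]; ring_nf
    have e2 : Real.exp (abs a * t) ≤ Real.exp ((abs a + 1) * t) :=
      Real.exp_le_exp.2 (by nlinarith)
    have tri : |(-(y * (Real.cosh t * Real.cosh (a * t))) - y * (Real.sinh t * (a * Real.sinh (a * t)))
          - a * (a * Real.cosh (a * t)))|
        ≤ y * (Real.cosh t * Real.cosh (a * t)) + y * (|Real.sinh t| * (abs a * |Real.sinh (a * t)|))
          + abs a * (abs a * Real.cosh (a * t)) := by
      calc _ ≤ |(-(y * (Real.cosh t * Real.cosh (a * t))) - y * (Real.sinh t * (a * Real.sinh (a * t))))|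
            + |a * (a * Real.cosh (a * t))| := abs_sub _ _
        _ ≤ |y * (Real.cosh t * Real.cosh (a * t))| + |y * (Real.sinh t * (a * Real.sinh (a * t)))|
            + |a * (a * Real.cosh (a * t))| := by
            have := abs_sub (-(y * (Real.cosh t * Real.cosh (a * t)))) (y * (Real.sinh t * (a * Real.sinh (a * t))))
            rw [abs_neg] at this
            linarith
        _ = y * (Real.cosh t * Real.cosh (a * t)) + y * (|Real.sinh t| * (abs a * |Real.sinh (a * t)|))
            + abs a * (abs a * Real.cosh (a * t)) := by
            simp [abs_mul, abs_of_pos hy, abs_of_nonneg (Real.cosh_pos t).le,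
              abs_of_nonneg (Real.cosh_pos (a*t)).le]
    have m1 : Real.cosh t * Real.cosh (a * t) ≤ Real.exp ((abs a + 1) * t) := by
      rw [← e1]
      exact mul_le_mul c1 c2 (Real.cosh_pos _).le (Real.exp_pos _).le
    have m2 : |Real.sinh t| * (abs a * |Real.sinh (a * t)|) ≤ abs a * Real.exp ((abs a + 1) * t) := by
      have : |Real.sinh t| * |Real.sinh (a * t)| ≤ Real.exp ((abs a + 1) * t) := by
        rw [← e1]
        exact mul_le_mul s1 s2 (abs_nonneg _) (Real.exp_pos _).le
      calc |Real.sinh t| * (abs a * |Real.sinh (a * t)|)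
          = abs a * (|Real.sinh t| * |Real.sinh (a * t)|) := by ring
        _ ≤ abs a * Real.exp ((abs a + 1) * t) := mul_le_mul_of_nonneg_left this (abs_nonneg a)
    have m3 : abs a * (abs a * Real.cosh (a * t)) ≤ abs a ^ 2 * Real.exp ((abs a + 1) * t) := by
      have : Real.cosh (a * t) ≤ Real.exp ((abs a + 1) * t) := c2.trans e2
      calc abs a * (abs a * Real.cosh (a * t)) = abs a ^ 2 * Real.cosh (a * t) := by ring
        _ ≤ abs a ^ 2 * Real.exp ((abs a + 1) * t) := mul_le_mul_of_nonneg_left this (by positivity)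
    have h5 := mul_le_mul_of_nonneg_left m1 hy.le
    have h6 := mul_le_mul_of_nonneg_left m2 hy.le
    have hfin : (y + y * abs a + abs a ^ 2) * Real.exp ((abs a + 1) * t)
        ≤ A * Real.exp ((abs a + 1) * t) := by
      apply mul_le_mul_of_nonneg_right _ (Real.exp_pos _).le
      nlinarith [abs_nonneg a]
    nlinarith [tri, h5, h6, m3, hfin]

lemma hasDerivAt_G (a c z : ℝ) (hz : 0 < z) :
    HasDerivAt (fun x => c * (x ^ a * IK 0 a x))
      (c * (a * z ^ (a - 1) * IK 0 a z - z ^ a * IK 1 a z)) z := by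
  have h1 : HasDerivAt (fun x : ℝ => x ^ a) (a * z ^ (a - 1)) z :=
    Real.hasDerivAt_rpow_const (Or.inl hz.ne')
  have := (h1.mul (hasDerivAt_IK 0 a z hz)).const_mul c
  refine this.congr_deriv ?_
  ring

lemma hasDerivAt_G1 (a c y : ℝ) (hy : 0 < y) :
    HasDerivAt (fun z => c * (a * z ^ (a - 1) * IK 0 a z - z ^ a * IK 1 a z))
      (c * (a * (a - 1) * y ^ (a - 2) * IK 0 a y - 2 * a * y ^ (a - 1) * IK 1 a y
        + y ^ a * IK 2 a y)) y := by
  have h1 : HasDerivAt (fun x : ℝ => x ^ (a - 1)) ((a - 1) * y ^ (a - 1 - 1)) y :=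
    Real.hasDerivAt_rpow_const (Or.inl hy.ne')
  have h2 : HasDerivAt (fun x : ℝ => x ^ a) (a * y ^ (a - 1)) y :=
    Real.hasDerivAt_rpow_const (Or.inl hy.ne')
  have hA := ((h1.mul (hasDerivAt_IK 0 a y hy)).const_mul a)
  have hB := (h2.mul (hasDerivAt_IK 1 a y hy))
  have := (hA.sub hB).const_mul c
  refine (this.congr_deriv ?_).congr_of_eventuallyEq (Eventually.of_forall fun z => ?_)
  · rw [show a - 2 = a - 1 - 1 by ring]
    ring
  · simp only [Pi.mul_apply, Pi.sub_apply]; ring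

lemma DLam_G (a b c y : ℝ) (hy : 0 < y) :
    DLam b 1 (fun x => c * (x ^ a * IK 0 a x)) y
      = (c * (2 * a + b - 1)) * (y ^ (a - 1) * IK 0 (a - 1) y) := by
  have hev : deriv (fun x => c * (x ^ a * IK 0 a x))
      =ᶠ[nhds y] (fun z => c * (a * z ^ (a - 1) * IK 0 a z - z ^ a * IK 1 a z)) := by
    filter_upwards [Ioi_mem_nhds hy] with z hz
    exact (hasDerivAt_G a c z hz).deriv
  rw [DLam]
  simp only [hev.deriv_eq, (hasDerivAt_G1 a c y hy).deriv, (hasDerivAt_G a c y hy).deriv]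
  set K := IK 0 a y
  set L := IK 1 a y
  set M := IK 2 a y
  set K' := IK 0 (a - 1) y
  have hK' : K' = (y * L - a * K) / y := by
    have := recA a y hy; field_simp; linarith
  have hM : M = (y * L + (y * y + a ^ 2) * K) / (y * y) := by
    have := odeC a y hy; field_simp; linarith
  have p1 : y ^ (a - 1) = y ^ a / y := by
    rw [Real.rpow_sub hy, Real.rpow_one]
  have p2 : y ^ (a - 2) = y ^ a / (y * y) := by
    rw [Real.rpow_sub hy, show ((2:ℝ) = ((2:ℕ):ℝ)) by norm_num, Real.rpow_natCast]
    norm_num; ring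
  rw [hK', hM, p1, p2]
  field_simp
  ring

lemma besselK_eq (a y : ℝ) : besselK a y = IK 0 a y := by
  simp [besselK, IK]

lemma DLam_congr (b lam : ℝ) (f g : ℝ → ℝ) (h : EqOn f g (Ioi 0)) (y : ℝ) (hy : 0 < y) :
    DLam b lam f y = DLam b lam g y := by
  have hev : f =ᶠ[nhds y] g := eventuallyEq_of_mem (Ioi_mem_nhds hy) h
  have hder : deriv f =ᶠ[nhds y] deriv g := by
    filter_upwards [Ioi_mem_nhds hy] with z hz
    exact (eventuallyEq_of_mem (Ioi_mem_nhds hz) h).deriv_eq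
  rw [DLam, DLam, hder.deriv_eq, hev.deriv_eq, h hy]

/-- for non-integer `s > 0`, with `𝔟 = 1 − 2(s − ⌊s⌋)` and `⌈s⌉ = ⌊s⌋ + 1`,
the iterate `(D_𝔟 + 1)^{⌈s⌉} ψ_s` vanishes identically on `(0,∞)`. -/
theorem psi_annihilated_by_iterate (s : ℝ) (hs : 0 < s) (hni : ∀ n : ℤ, s ≠ n)
    (b : ℝ) (hb : b = 1 - 2 * (s - (⌊s⌋₊ : ℝ))) :
    ∀ y : ℝ, 0 < y → DLamIter b 1 (⌊s⌋₊ + 1) (psi s) y = 0 := by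
  set m := ⌊s⌋₊ with hm
  -- induction: formula at every n
  have main : ∀ n : ℕ, ∃ c : ℝ, ∀ y : ℝ, 0 < y →
      DLamIter b 1 n (psi s) y = c * (y ^ (s - n) * IK 0 (s - n) y) := by
    intro n
    induction n with
    | zero =>
      refine ⟨(2 : ℝ) ^ (1 - s) / Real.Gamma s, fun y hy => ?_⟩
      simp only [DLamIter, Function.iterate_zero, id_eq, psi, if_neg hy.ne',
        abs_of_pos hy, besselK_eq, Nat.cast_zero, sub_zero]
      ring
    | succ n ih =>
      obtain ⟨c, hc⟩ := ih
      refine ⟨c * (2 * (s - n) + b - 1), fun y hy => ?_⟩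
      have hstep : DLamIter b 1 (n + 1) (psi s) y
          = DLam b 1 (DLamIter b 1 n (psi s)) y := by
        simp only [DLamIter, Function.iterate_succ_apply']
      rw [hstep,
        DLam_congr b 1 _ (fun x => c * (x ^ (s - n) * IK 0 (s - n) x))
          (fun z hz => hc z hz) y hy,
        DLam_G (s - n) b c y hy]
      have : s - (n : ℝ) - 1 = s - ((n + 1 : ℕ) : ℝ) := by push_cast; ring
      rw [this]
  obtain ⟨c, hc⟩ := main m
  intro y hy
  have hstep : DLamIter b 1 (m + 1) (psi s) y = DLam b 1 (DLamIter b 1 m (psi s)) y := by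
    simp only [DLamIter, Function.iterate_succ_apply']
  rw [hstep,
    DLam_congr b 1 _ (fun x => c * (x ^ (s - m) * IK 0 (s - m) x)) (fun z hz => hc z hz) y hy,
    DLam_G (s - m) b c y hy]
  have hz : 2 * (s - (m : ℝ)) + b - 1 = 0 := by rw [hb, hm]; ring
  rw [hz, mul_zero, zero_mul]
end

section
/- Let s > 0 be non-integer, 𝔟 = 1 − 2(s − ⌊s⌋), d_s = 2^𝔟·Γ((1+𝔟)/2)·⌊s⌋!/Γ(s), and let λ > 0. Define ψ_{s,λ}(y) = ψ_s(√λ·y). Then y^𝔟 · d/dy[ ((D_𝔟 + λ)^{⌊s⌋} ψ_{s,λ})(y) ] → −d_s·λ^s as y → 0⁺, where the operator (D_𝔟 + λ)^{⌊s⌋} is applied pointwise on (0, ∞). -/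
open MeasureTheory Real Filter Set

open scoped Topology

namespace BesselProofAux


lemma cosh_le_exp_abs (x : ℝ) : Real.cosh x ≤ Real.exp |x| := by
  rw [Real.cosh_eq]
  have h1 : Real.exp x ≤ Real.exp |x| := Real.exp_le_exp.2 (le_abs_self x)
  have h2 : Real.exp (-x) ≤ Real.exp |x| := Real.exp_le_exp.2 (neg_le_abs x)
  linarith

lemma abs_sinh_le_cosh (x : ℝ) : |Real.sinh x| ≤ Real.cosh x := by
  rw [abs_le, Real.sinh_eq, Real.cosh_eq]
  constructor <;> nlinarith [Real.exp_pos x, Real.exp_pos (-x)]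

lemma tendsto_exp_sub_cosh (c y : ℝ) (hy : 0 < y) :
    Tendsto (fun t : ℝ => Real.exp (c * t - y * Real.cosh t)) atTop (𝓝 0) := by
  apply Real.tendsto_exp_atBot.comp
  have h1 : Tendsto (fun t : ℝ => Real.exp t * (c * (t * Real.exp (-t)) - y / 2)) atTop atBot := by
    apply Filter.Tendsto.atTop_mul_neg (by linarith : -(y/2) < (0:ℝ)) Real.tendsto_exp_atTop
    have := (Real.tendsto_pow_mul_exp_neg_atTop_nhds_zero 1).const_mul c
    simp only [pow_one, mul_zero] at this
    simpa using this.sub_const (y/2)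
  apply tendsto_atBot_mono' _ _ h1
  filter_upwards [eventually_ge_atTop (0:ℝ)] with t ht
  have hc : y * Real.cosh t ≥ y * (Real.exp t / 2) := by
    have : Real.exp t / 2 ≤ Real.cosh t := by
      rw [Real.cosh_eq]; have := (Real.exp_pos (-t)).le; linarith
    exact mul_le_mul_of_nonneg_left this hy.le
  have hexp : Real.exp t * (c * (t * Real.exp (-t))) = c * t := by
    rw [Real.exp_neg]; field_simp
  have : Real.exp t * (c * (t * Real.exp (-t)) - y / 2) = c * t - y/2 * Real.exp t := by
    rw [mul_sub, hexp]; ring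
  rw [this]
  linarith

lemma integrableOn_of_bound {f : ℝ → ℝ} {y : ℝ} (hy : 0 < y) (c : ℝ) (hf : Continuous f)
    (hbd : ∀ t, 0 ≤ t → |f t| ≤ Real.exp (c * t - y * Real.cosh t)) :
    IntegrableOn f (Ioi (0:ℝ)) := by
  have hg : IntegrableOn (fun t => Real.exp (c * t - y * Real.cosh t)) (Ioi (0:ℝ)) := by
    apply integrable_of_isBigO_exp_neg (one_pos) (Continuous.continuousOn (by continuity))
    have hto : Tendsto (fun t : ℝ => Real.exp (c * t - y * Real.cosh t) / Real.exp (-1 * t))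
        atTop (𝓝 0) := by
      have := tendsto_exp_sub_cosh (c + 1) y hy
      apply this.congr
      intro t
      rw [← Real.exp_sub]
      ring_nf
    exact (Asymptotics.isLittleO_of_tendsto (fun x h => absurd h (Real.exp_ne_zero _)) hto).isBigO
  apply hg.integrable.mono' hf.aestronglyMeasurable
  filter_upwards [ae_restrict_mem measurableSet_Ioi] with t ht
  simpa using hbd t (le_of_lt ht)

-- product-to-sum identities
lemma cosh_mul_cosh (u v : ℝ) : Real.cosh u * Real.cosh v
    = (Real.cosh (u + v) + Real.cosh (u - v)) / 2 := by
  rw [Real.cosh_add, Real.cosh_sub]; ring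

lemma sinh_mul_sinh (u v : ℝ) : Real.sinh u * Real.sinh v
    = (Real.cosh (u + v) - Real.cosh (u - v)) / 2 := by
  rw [Real.cosh_add, Real.cosh_sub]; ring

-- bound helpers for specific integrands
lemma bound_K (a y : ℝ) (t : ℝ) (ht : 0 ≤ t) :
    |Real.exp (-(y * Real.cosh t)) * Real.cosh (a * t)|
      ≤ Real.exp (|a| * t - y * Real.cosh t) := by
  rw [abs_mul, abs_of_pos (Real.exp_pos _), abs_of_pos (Real.cosh_pos _),
    Real.exp_sub, Real.exp_neg]
  rw [div_eq_mul_inv, mul_comm (Real.exp (|a| * t))]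
  apply mul_le_mul_of_nonneg_left _ (by positivity)
  calc Real.cosh (a * t) ≤ Real.exp |a * t| := cosh_le_exp_abs _
    _ = Real.exp (|a| * t) := by rw [abs_mul, abs_of_nonneg ht]

lemma integrableOn_K (a y : ℝ) (hy : 0 < y) :
    IntegrableOn (fun t => Real.exp (-(y * Real.cosh t)) * Real.cosh (a * t)) (Ioi (0:ℝ)) := by
  exact integrableOn_of_bound hy |a| (by continuity) (bound_K a y)

lemma integrableOn_coshK (a y : ℝ) (hy : 0 < y) :
    IntegrableOn (fun t => Real.cosh t * (Real.exp (-(y * Real.cosh t)) * Real.cosh (a * t)))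
      (Ioi (0:ℝ)) := by
  apply integrableOn_of_bound hy (|a| + 1) (by continuity)
  intro t ht
  rw [abs_mul, abs_of_pos (Real.cosh_pos _)]
  calc Real.cosh t * |Real.exp (-(y * Real.cosh t)) * Real.cosh (a * t)|
      ≤ Real.exp t * Real.exp (|a| * t - y * Real.cosh t) := by
        apply mul_le_mul _ (bound_K a y t ht) (abs_nonneg _) (Real.exp_pos _).le
        calc Real.cosh t ≤ Real.exp |t| := cosh_le_exp_abs t
          _ = Real.exp t := by rw [abs_of_nonneg ht]
    _ = Real.exp ((|a| + 1) * t - y * Real.cosh t) := by rw [← Real.exp_add]; ring_nf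

lemma integrableOn_L (a y : ℝ) (hy : 0 < y) :
    IntegrableOn (fun t => Real.exp (-(y * Real.cosh t)) * (Real.sinh t * Real.sinh (a * t)))
      (Ioi (0:ℝ)) := by
  apply integrableOn_of_bound hy (|a| + 1) (by continuity)
  intro t ht
  rw [abs_mul, abs_of_pos (Real.exp_pos _), abs_mul]
  calc Real.exp (-(y * Real.cosh t)) * (|Real.sinh t| * |Real.sinh (a * t)|)
      ≤ Real.exp (-(y * Real.cosh t)) * (Real.exp t * Real.exp (|a| * t)) := by
        apply mul_le_mul_of_nonneg_left _ (Real.exp_pos _).le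
        apply mul_le_mul _ _ (abs_nonneg _) (Real.exp_pos _).le
        · exact (abs_sinh_le_cosh t).trans ((cosh_le_exp_abs t).trans
            (by rw [abs_of_nonneg ht]))
        · exact (abs_sinh_le_cosh _).trans ((cosh_le_exp_abs _).trans
            (by rw [abs_mul, abs_of_nonneg ht]))
    _ = Real.exp ((|a| + 1) * t - y * Real.cosh t) := by rw [← Real.exp_add, ← Real.exp_add]; ring_nf



-- chunk 3 : derivative and IBP


/-- F1: derivative of besselK in `y`. -/
lemma hasDerivAt_besselK (a y : ℝ) (hy : 0 < y) :
    HasDerivAt (besselK a)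
      (-∫ t in Ioi (0:ℝ), Real.cosh t * (Real.exp (-(y * Real.cosh t)) * Real.cosh (a * t))) y := by
  have key := hasDerivAt_integral_of_dominated_loc_of_deriv_le (μ := volume.restrict (Ioi (0:ℝ)))
    (F := fun x t => Real.exp (-(x * Real.cosh t)) * Real.cosh (a * t))
    (F' := fun x t => -(Real.cosh t * (Real.exp (-(x * Real.cosh t)) * Real.cosh (a * t))))
    (x₀ := y)
    (bound := fun t => Real.cosh t * (Real.exp (-((y/2) * Real.cosh t)) * Real.cosh (a * t)))
    (Metric.ball_mem_nhds y (half_pos hy))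
    (Eventually.of_forall fun x => (Continuous.aestronglyMeasurable (by continuity)))
    (integrableOn_K a y hy)
    (Continuous.aestronglyMeasurable (by continuity))
    ?_ ((integrableOn_coshK a (y/2) (half_pos hy)))
    ?_
  · rcases key with ⟨-, hd⟩
    rw [integral_neg] at hd
    exact hd
  · filter_upwards [ae_restrict_mem measurableSet_Ioi] with t ht
    intro x hx
    rw [Metric.mem_ball, Real.dist_eq, abs_lt] at hx
    have hx2 : y/2 ≤ x := by linarith [hx.1]
    rw [norm_neg, norm_mul, norm_mul, Real.norm_eq_abs, Real.norm_eq_abs, Real.norm_eq_abs,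
      abs_of_pos (Real.cosh_pos t), abs_of_pos (Real.exp_pos _), abs_of_pos (Real.cosh_pos _)]
    apply mul_le_mul_of_nonneg_left _ (Real.cosh_pos t).le
    apply mul_le_mul_of_nonneg_right _ (Real.cosh_pos _).le
    apply Real.exp_le_exp.2
    rw [neg_le_neg_iff]
    exact mul_le_mul_of_nonneg_right hx2 (Real.cosh_pos t).le
  · apply ae_of_all
    intro t x _
    have h1 : HasDerivAt (fun x : ℝ => -(x * Real.cosh t)) (-(Real.cosh t)) x := by
      simpa using ((hasDerivAt_id x).mul_const (Real.cosh t)).fun_neg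
    have := (h1.exp).mul_const (Real.cosh (a * t))
    convert this using 1
    rfl
    ring

/-- F3: integration by parts: `a * K_a(y) = y * ∫ sinh t sinh (a t) e^{-y cosh t}`. -/
lemma ibp (a y : ℝ) (hy : 0 < y) :
    a * besselK a y
      = y * ∫ t in Ioi (0:ℝ), Real.exp (-(y * Real.cosh t)) * (Real.sinh t * Real.sinh (a * t)) := by
  set f : ℝ → ℝ := fun t => Real.exp (-(y * Real.cosh t)) * Real.sinh (a * t) with hf
  set f' : ℝ → ℝ := fun t =>
      a * (Real.exp (-(y * Real.cosh t)) * Real.cosh (a * t))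
      - y * (Real.exp (-(y * Real.cosh t)) * (Real.sinh t * Real.sinh (a * t))) with hf'
  have hderiv : ∀ t ∈ Ici (0:ℝ), HasDerivAt f (f' t) t := by
    intro t _
    have h1 : HasDerivAt (fun t : ℝ => -(y * Real.cosh t)) (-(y * Real.sinh t)) t := by
      simpa using ((Real.hasDerivAt_cosh t).const_mul y).fun_neg
    have h2 : HasDerivAt (fun t : ℝ => Real.sinh (a * t)) (Real.cosh (a * t) * a) t := by
      exact (Real.hasDerivAt_sinh (a*t)).comp t (by simpa using (hasDerivAt_id t).const_mul a)
    have := (h1.exp).fun_mul h2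
    refine this.congr_deriv (Eq.symm ?_)
    simp only [hf']
    ring
  have hint : IntegrableOn f' (Ioi (0:ℝ)) :=
    ((integrableOn_K a y hy).const_mul a).sub ((integrableOn_L a y hy).const_mul y)
  have htend : Tendsto f atTop (𝓝 0) := by
    apply squeeze_zero_norm' _ (tendsto_exp_sub_cosh (|a|) y hy)
    filter_upwards [eventually_ge_atTop (0:ℝ)] with t ht
    simp only [hf, Real.norm_eq_abs, abs_mul, abs_of_pos (Real.exp_pos _)]
    rw [Real.exp_sub, Real.exp_neg (y * Real.cosh t)]
    rw [show Real.exp (|a| * t) / Real.exp (y * Real.cosh t)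
        = (Real.exp (y * Real.cosh t))⁻¹ * Real.exp (|a| * t) by ring]
    apply mul_le_mul_of_nonneg_left _ (by positivity)
    exact (abs_sinh_le_cosh _).trans ((cosh_le_exp_abs _).trans
      (le_of_eq (by rw [abs_mul, abs_of_nonneg ht])))
  have h0 : (∫ t in Ioi (0:ℝ), f' t) = 0 - f 0 :=
    integral_Ioi_of_hasDerivAt_of_tendsto' hderiv hint htend
  have hf0 : f 0 = 0 := by simp [hf]
  rw [hf0, sub_zero] at h0
  have hsplit : (∫ t in Ioi (0:ℝ), f' t)
      = a * besselK a y
        - y * ∫ t in Ioi (0:ℝ), Real.exp (-(y * Real.cosh t)) * (Real.sinh t * Real.sinh (a * t)) := by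
    rw [hf']
    rw [integral_sub ((integrableOn_K a y hy).const_mul a) ((integrableOn_L a y hy).const_mul y)]
    rw [integral_const_mul, integral_const_mul]
    rfl
  linarith [hsplit ▸ h0]





lemma point_sinh (a t y : ℝ) :
    Real.exp (-(y * Real.cosh t)) * (Real.sinh t * Real.sinh (a * t))
      = (Real.exp (-(y * Real.cosh t)) * Real.cosh ((a+1) * t)
          - Real.exp (-(y * Real.cosh t)) * Real.cosh ((a-1) * t)) / 2 := by
  rw [show (a+1) * t = a*t + t by ring, show (a-1) * t = a*t - t by ring,
    Real.cosh_add, Real.cosh_sub]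
  ring

lemma point_cosh (a t y : ℝ) :
    Real.cosh t * (Real.exp (-(y * Real.cosh t)) * Real.cosh (a * t))
      = (Real.exp (-(y * Real.cosh t)) * Real.cosh ((a+1) * t)
          + Real.exp (-(y * Real.cosh t)) * Real.cosh ((a-1) * t)) / 2 := by
  rw [show (a+1) * t = a*t + t by ring, show (a-1) * t = a*t - t by ring,
    Real.cosh_add, Real.cosh_sub]
  ring

/-- F4: `a·K_a = (y/2)(K_{a+1} − K_{a−1})`. -/
lemma besselK_rec (a y : ℝ) (hy : 0 < y) :
    a * besselK a y = y / 2 * (besselK (a+1) y - besselK (a-1) y) := by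
  rw [ibp a y hy]
  have : (∫ t in Ioi (0:ℝ), Real.exp (-(y * Real.cosh t)) * (Real.sinh t * Real.sinh (a * t)))
      = (besselK (a+1) y - besselK (a-1) y) / 2 := by
    simp only [point_sinh a _ y]
    rw [integral_div, integral_sub (integrableOn_K (a+1) y hy) (integrableOn_K (a-1) y hy)]
    rfl
  rw [this]
  ring

/-- F5: the derivative of `K_a` in closed form. -/
lemma hasDerivAt_besselK' (a y : ℝ) (hy : 0 < y) :
    HasDerivAt (besselK a) (-(besselK (a-1) y) - a / y * besselK a y) y := by
  have h1 := hasDerivAt_besselK a y hy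
  have h2 : (∫ t in Ioi (0:ℝ), Real.cosh t * (Real.exp (-(y * Real.cosh t)) * Real.cosh (a * t)))
      = (besselK (a+1) y + besselK (a-1) y) / 2 := by
    simp only [point_cosh a _ y]
    rw [integral_div, integral_add (integrableOn_K (a+1) y hy) (integrableOn_K (a-1) y hy)]
    rfl
  rw [h2] at h1
  have h3 := besselK_rec a y hy
  convert h1 using 1
  field_simp
  ring_nf
  ring_nf at h3
  linarith





/-- the scaled function `φ_ν(y) = (√λ y)^ν K_ν(√λ y)` -/
noncomputable def phi (lam ν : ℝ) (y : ℝ) : ℝ :=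
  (Real.sqrt lam * y) ^ ν * besselK ν (Real.sqrt lam * y)

lemma phi_hasDerivAt {lam : ℝ} (hlam : 0 < lam) (ν : ℝ) {y : ℝ} (hy : 0 < y) :
    HasDerivAt (phi lam ν) (-(lam * y * phi lam (ν-1) y)) y := by
  have hsl : 0 < Real.sqrt lam := Real.sqrt_pos.2 hlam
  set z : ℝ := Real.sqrt lam * y with hz
  have hzpos : 0 < z := mul_pos hsl hy
  have hu : HasDerivAt (fun w : ℝ => w ^ ν * besselK ν w) (-(z ^ ν * besselK (ν-1) z)) z := by
    have h1 : HasDerivAt (fun w : ℝ => w ^ ν) (ν * z ^ (ν - 1)) z :=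
      Real.hasDerivAt_rpow_const (Or.inl hzpos.ne')
    have h2 := hasDerivAt_besselK' ν z hzpos
    have := h1.fun_mul h2
    refine this.congr_deriv (Eq.symm ?_)
    have hz1 : z ^ (ν - 1) = z ^ ν / z := by
      rw [Real.rpow_sub hzpos, Real.rpow_one]
    rw [hz1]
    field_simp
    ring
  have hlin : HasDerivAt (fun t : ℝ => Real.sqrt lam * t) (Real.sqrt lam) y := by
    simpa using (hasDerivAt_id y).const_mul (Real.sqrt lam)
  have := hu.comp y hlin
  refine this.congr_deriv (Eq.symm ?_)
  have hz1 : z ^ ν = z ^ (ν - 1) * z := by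
    rw [← Real.rpow_add_one hzpos.ne' (ν - 1), sub_add_cancel]
  have hzz : z * Real.sqrt lam = lam * y := by
    rw [hz]; rw [show Real.sqrt lam * y * Real.sqrt lam = Real.sqrt lam * Real.sqrt lam * y by ring,
      Real.mul_self_sqrt hlam.le]
  simp only [phi, ← hz, hz1]
  calc -(lam * y * (z ^ (ν-1) * besselK (ν-1) z))
      = -(z ^ (ν-1) * besselK (ν-1) z * (lam * y)) := by ring
    _ = -(z ^ (ν-1) * besselK (ν-1) z * (z * Real.sqrt lam)) := by rw [hzz]
    _ = -(z ^ (ν-1) * z * besselK (ν-1) z) * Real.sqrt lam := by ring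

lemma phi_rec {lam : ℝ} (hlam : 0 < lam) (ν : ℝ) {y : ℝ} (hy : 0 < y) :
    lam * y^2 * phi lam (ν-2) y = phi lam ν y - 2*(ν-1) * phi lam (ν-1) y := by
  have hsl : 0 < Real.sqrt lam := Real.sqrt_pos.2 hlam
  set z : ℝ := Real.sqrt lam * y with hz
  have hzpos : 0 < z := mul_pos hsl hy
  have hzsq : lam * y^2 = z * z := by
    rw [hz, show Real.sqrt lam * y * (Real.sqrt lam * y)
      = Real.sqrt lam * Real.sqrt lam * y^2 by ring, Real.mul_self_sqrt hlam.le]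
  simp only [phi, ← hz]
  clear_value z
  have hrec := besselK_rec (ν-1) z hzpos
  rw [show ν-1+1 = ν by ring, show ν-1-1 = ν-2 by ring] at hrec
  have hz1 : z ^ (ν-1) = z ^ (ν-2) * z := by
    rw [← Real.rpow_add_one hzpos.ne' (ν - 2), show ν-2+1 = ν-1 by ring]
  have hz2 : z ^ ν = z ^ (ν-1) * z := by
    rw [← Real.rpow_add_one hzpos.ne' (ν - 1), sub_add_cancel]
  rw [hzsq, hz1, hz2, hz1]
  linear_combination (2 * z ^ (ν-2) * z) * hrec

/-- derivative of `c • φ_ν`. -/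
lemma cphi_hasDerivAt {lam : ℝ} (hlam : 0 < lam) (C ν : ℝ) {y : ℝ} (hy : 0 < y) :
    HasDerivAt (fun t => C * phi lam ν t) (-(C * lam) * (y * phi lam (ν-1) y)) y := by
  have := (phi_hasDerivAt hlam ν hy).const_mul C
  refine this.congr_deriv (Eq.symm ?_)
  ring

/-- DLam applied to `c • φ_ν`. -/
lemma DLam_cphi {lam : ℝ} (hlam : 0 < lam) (b C ν : ℝ) {y : ℝ} (hy : 0 < y) :
    DLam b lam (fun t => C * phi lam ν t) y
      = (C * (lam * (b + 2*ν - 1))) * phi lam (ν-1) y := by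
  set g : ℝ → ℝ := fun t => C * phi lam ν t with hg
  set h : ℝ → ℝ := fun x => -(C * lam) * (x * phi lam (ν - 1) x) with hh
  have hderiv_eq : ∀ x ∈ Ioi (0:ℝ), deriv g x = h x := by
    intro x hx
    have := ((phi_hasDerivAt hlam ν hx).const_mul C).deriv
    rw [hg, hh, this]
    ring
  have hev : deriv g =ᶠ[nhds y] h := by
    filter_upwards [Ioi_mem_nhds hy] with x hx using hderiv_eq x hx
  have hp : HasDerivAt (phi lam (ν-1)) (-(lam * y * phi lam (ν-2) y)) y := by
    have := phi_hasDerivAt hlam (ν-1) hy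
    rwa [show ν-1-1 = ν-2 by ring] at this
  have hh' : HasDerivAt h
      (-(C * lam) * (1 * phi lam (ν-1) y + y * -(lam * y * phi lam (ν-2) y))) y :=
    ((hasDerivAt_id y).mul hp).const_mul _
  have hdd : deriv (deriv g) y
      = -(C * lam) * (1 * phi lam (ν-1) y + y * -(lam * y * phi lam (ν-2) y)) := by
    rw [hev.deriv_eq]
    exact hh'.deriv
  have hd1 : deriv g y = -(C * lam) * (y * phi lam (ν-1) y) := hderiv_eq y hy
  have hdiv : b / y * deriv g y = b * (-(C * lam) * phi lam (ν-1) y) := by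
    rw [hd1]; field_simp
  have hgy : g y = C * phi lam ν y := rfl
  simp only [DLam]
  rw [hdd, hdiv, hgy]
  have hrec := phi_rec hlam ν hy
  linear_combination (-(C * lam)) * hrec





lemma besselK_even (a y : ℝ) : besselK (-a) y = besselK a y := by
  simp only [besselK, neg_mul, Real.cosh_neg]

/-- whole-line master integrability -/
lemma integrable_of_bound_R {f : ℝ → ℝ} {y : ℝ} (hy : 0 < y) (c : ℝ) (hf : Continuous f)
    (hbd : ∀ t, |f t| ≤ Real.exp (c * |t| - y * Real.cosh t)) : Integrable f := by
  have hIoi : IntegrableOn f (Ioi (0:ℝ)) := by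
    apply integrableOn_of_bound hy c hf
    intro t ht
    simpa [abs_of_nonneg ht] using hbd t
  have hIic : IntegrableOn f (Iic (0:ℝ)) := by
    rw [← Measure.map_neg_eq_self (volume : Measure ℝ)]
    have m : MeasurableEmbedding fun x : ℝ => -x := (Homeomorph.neg ℝ).measurableEmbedding
    rw [m.integrableOn_map_iff]
    simp only [Function.comp_def, neg_preimage, neg_Iic, neg_zero]
    rw [integrableOn_Ici_iff_integrableOn_Ioi]
    apply integrableOn_of_bound hy c (hf.comp continuous_neg)
    intro t ht
    simpa [abs_of_nonneg ht] using hbd (-t)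
  have : IntegrableOn f (Iic 0 ∪ Ioi 0) := hIic.union hIoi
  rwa [Iic_union_Ioi, integrableOn_univ] at this

lemma integral_even_eq {f : ℝ → ℝ} (hev : ∀ x, f (-x) = f x) :
    ∫ x, f x = 2 * ∫ x in Ioi (0:ℝ), f x := by
  have h : ∀ x, f |x| = f x := by
    intro x
    rcases le_or_gt 0 x with h | h
    · rw [abs_of_nonneg h]
    · rw [abs_of_neg h, hev]
  calc ∫ x, f x = ∫ x, f |x| := by congr 1; funext x; rw [h]
    _ = 2 * ∫ x in Ioi (0:ℝ), f x := integral_comp_abs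





/-- substitution `x = e^t` : `∫_ℝ e^{-z cosh t + a t} dt = ∫_{(0,∞)} e^{-(z/2)(x+1/x)} x^{a-1}`. -/
lemma exp_subst (z a : ℝ) :
    (∫ t : ℝ, Real.exp (a * t - z * Real.cosh t))
      = ∫ x in Ioi (0:ℝ), Real.exp (-(z/2) * (x + x⁻¹)) * x ^ (a - 1) := by
  have him := integral_image_eq_integral_abs_deriv_smul
    (MeasurableSet.univ) (f := Real.exp) (f' := Real.exp)
    (fun x _ => (Real.hasDerivAt_exp x).hasDerivWithinAt) (Real.exp_injective.injOn)
    (fun x => Real.exp (-(z/2) * (x + x⁻¹)) * x ^ (a - 1))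
  rw [image_univ, Real.range_exp] at him
  rw [him, Measure.restrict_univ]
  congr 1
  funext t
  rw [abs_of_pos (Real.exp_pos t), smul_eq_mul,
    Real.rpow_def_of_pos (Real.exp_pos t), Real.log_exp, ← Real.exp_add, ← Real.exp_add,
    ← Real.exp_neg t]
  congr 1
  rw [Real.cosh_eq, Real.exp_neg t]
  field_simp [Real.exp_ne_zero]
  ring

lemma integrable_exp_sub_cosh_R (z a : ℝ) (hz : 0 < z) :
    Integrable (fun t : ℝ => Real.exp (a * t - z * Real.cosh t)) := by
  apply integrable_of_bound_R hz |a| (by continuity)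
  intro t
  rw [abs_of_pos (Real.exp_pos _), Real.exp_le_exp]
  have : a * t ≤ |a| * |t| := le_trans (le_abs_self _) (by rw [abs_mul])
  linarith

/-- `besselK` in `x`-space: `K_ν(z) = T1/2`. -/
lemma besselK_eq_T1 (ν z : ℝ) (hz : 0 < z) :
    besselK ν z = (∫ x in Ioi (0:ℝ), Real.exp (-(z/2) * (x + x⁻¹)) * x ^ (ν - 1)) / 2 := by
  have hg_even : ∀ t : ℝ, Real.exp (-(z * Real.cosh (-t))) * Real.cosh (ν * -t)
      = Real.exp (-(z * Real.cosh t)) * Real.cosh (ν * t) := by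
    intro t; rw [Real.cosh_neg, mul_neg, Real.cosh_neg]
  have hA : (∫ t : ℝ, Real.exp (-(z * Real.cosh t)) * Real.cosh (ν * t)) = 2 * besselK ν z :=
    integral_even_eq hg_even
  have hpt : ∀ t : ℝ, Real.exp (-(z * Real.cosh t)) * Real.cosh (ν * t)
      = (Real.exp (ν * t - z * Real.cosh t) + Real.exp ((-ν) * t - z * Real.cosh t)) / 2 := by
    intro t
    rw [Real.cosh_eq (ν * t), Real.exp_sub, Real.exp_sub, neg_mul, Real.exp_neg (ν * t)]
    rw [Real.exp_neg (z * Real.cosh t)]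
    field_simp [Real.exp_ne_zero]
  have hsplit : (∫ t : ℝ, Real.exp (-(z * Real.cosh t)) * Real.cosh (ν * t))
      = ((∫ t : ℝ, Real.exp (ν * t - z * Real.cosh t))
          + ∫ t : ℝ, Real.exp ((-ν) * t - z * Real.cosh t)) / 2 := by
    rw [show (fun t : ℝ => Real.exp (-(z * Real.cosh t)) * Real.cosh (ν * t))
        = fun t => (Real.exp (ν * t - z * Real.cosh t) + Real.exp ((-ν) * t - z * Real.cosh t)) / 2
        from funext hpt]
    rw [integral_div, integral_add (integrable_exp_sub_cosh_R z ν hz)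
      (integrable_exp_sub_cosh_R z (-ν) hz)]
  -- inversion symmetry: the `-ν` piece equals the `ν` piece
  have hT2 : (∫ x in Ioi (0:ℝ), Real.exp (-(z/2) * (x + x⁻¹)) * x ^ ((-ν) - 1))
      = ∫ x in Ioi (0:ℝ), Real.exp (-(z/2) * (x + x⁻¹)) * x ^ (ν - 1) := by
    have hinv := integral_comp_rpow_Ioi
      (fun x => Real.exp (-(z/2) * (x + x⁻¹)) * x ^ (ν - 1)) (p := (-1:ℝ)) (by norm_num)
    rw [← hinv]
    apply setIntegral_congr_fun measurableSet_Ioi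
    intro x hx
    have hx0 : (0:ℝ) < x := hx
    have e1 : x ^ ((-1):ℝ) = x⁻¹ := Real.rpow_neg_one x
    have e2 : ((x:ℝ)⁻¹) ^ (ν - 1) = x ^ (1 - ν) := by
      rw [← Real.rpow_neg_one x, ← Real.rpow_mul hx0.le, show (-1)*(ν-1) = 1-ν by ring]
    have e3 : x ^ ((-2):ℝ) * x ^ (1 - ν) = x ^ ((-ν) - 1) := by
      rw [← Real.rpow_add hx0]; congr 1; ring
    simp only [e1, inv_inv, smul_eq_mul, e2]
    rw [show |(-1:ℝ)| = 1 by norm_num, one_mul, show (-1:ℝ) - 1 = ((-2):ℝ) by norm_num]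
    rw [add_comm x⁻¹ x]
    rw [← e3]
    ring
  have h1 : (∫ t : ℝ, Real.exp (ν * t - z * Real.cosh t))
      = ∫ x in Ioi (0:ℝ), Real.exp (-(z/2) * (x + x⁻¹)) * x ^ (ν - 1) := exp_subst z ν
  have h2 : (∫ t : ℝ, Real.exp ((-ν) * t - z * Real.cosh t))
      = ∫ x in Ioi (0:ℝ), Real.exp (-(z/2) * (x + x⁻¹)) * x ^ (ν - 1) := by
    rw [exp_subst z (-ν)]; exact hT2
  rw [h1, h2] at hsplit
  rw [hA] at hsplit
  linarith

/-- the `w`-space integral -/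
noncomputable def Jfun (ν z : ℝ) : ℝ :=
  ∫ w in Ioi (0:ℝ), Real.exp (-(w + z^2/(4*w))) * w ^ (ν - 1)

lemma T1_eq_J (ν z : ℝ) (hz : 0 < z) :
    (∫ x in Ioi (0:ℝ), Real.exp (-(z/2) * (x + x⁻¹)) * x ^ (ν - 1))
      = (2/z) ^ ν * Jfun ν z := by
  have hb : (0:ℝ) < 2/z := by positivity
  have h := integral_comp_mul_left_Ioi
    (fun x => Real.exp (-(z/2) * (x + x⁻¹)) * x ^ (ν - 1)) 0 hb
  simp only [mul_zero, smul_eq_mul] at h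
  have hpt : ∀ w ∈ Ioi (0:ℝ),
      Real.exp (-(z/2) * ((2/z * w) + (2/z * w)⁻¹)) * (2/z * w) ^ (ν - 1)
        = (2/z) ^ (ν - 1) * (Real.exp (-(w + z^2/(4*w))) * w ^ (ν - 1)) := by
    intro w hw
    have hw0 : (0:ℝ) < w := hw
    rw [Real.mul_rpow hb.le hw0.le]
    rw [show -(z/2) * ((2/z * w) + (2/z * w)⁻¹) = -(w + z^2/(4*w)) by
      field_simp
      ring]
    ring
  have hL : (∫ x in Ioi (0:ℝ),
      Real.exp (-(z/2) * ((2/z * x) + (2/z * x)⁻¹)) * (2/z * x) ^ (ν - 1))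
      = (2/z) ^ (ν - 1) * Jfun ν z := by
    rw [setIntegral_congr_fun measurableSet_Ioi hpt, Jfun, integral_const_mul]
  rw [hL] at h
  have hpow : (2/z) ^ ν = (2/z) * (2/z) ^ (ν - 1) := by
    rw [mul_comm, ← Real.rpow_add_one hb.ne' (ν - 1), sub_add_cancel]
  rw [hpow]
  rw [show 2/z * (2/z) ^ (ν-1) * Jfun ν z = 2/z * ((2/z) ^ (ν-1) * Jfun ν z) by ring, h]
  field_simp

lemma J_integrand_bound (ν z w : ℝ) (hw : 0 < w) :
    ‖Real.exp (-(w + z^2/(4*w))) * w ^ (ν - 1)‖ ≤ Real.exp (-w) * w ^ (ν - 1) := by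
  rw [Real.norm_eq_abs, abs_mul, abs_of_pos (Real.exp_pos _),
    abs_of_pos (Real.rpow_pos_of_pos hw _)]
  apply mul_le_mul_of_nonneg_right _ (Real.rpow_pos_of_pos hw _).le
  apply Real.exp_le_exp.2
  have : 0 ≤ z^2/(4*w) := by positivity
  linarith

lemma J_tendsto {ν : ℝ} (hν : 0 < ν) :
    Tendsto (fun z => Jfun ν z) (nhdsWithin 0 (Ioi (0:ℝ))) (nhds (Real.Gamma ν)) := by
  rw [Real.Gamma_eq_integral hν]
  apply tendsto_integral_filter_of_dominated_convergence
    (bound := fun w => Real.exp (-w) * w ^ (ν - 1))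
  · apply Eventually.of_forall
    intro z
    apply ContinuousOn.aestronglyMeasurable _ measurableSet_Ioi
    apply ContinuousOn.mul
    · apply Continuous.comp_continuousOn Real.continuous_exp
      apply ContinuousOn.neg
      apply ContinuousOn.add continuousOn_id
      exact (continuousOn_const.div (continuousOn_const.mul continuousOn_id)
        (fun x hx => by simp [ne_of_gt (show (0:ℝ) < x from hx)]))
    · exact ContinuousOn.rpow_const continuousOn_id
        (fun x hx => Or.inl (ne_of_gt (show (0:ℝ) < x from hx)))
  · apply Eventually.of_forall
    intro z
    filter_upwards [ae_restrict_mem measurableSet_Ioi] with w hw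
    exact J_integrand_bound ν z w hw
  · exact Real.GammaIntegral_convergent hν
  · filter_upwards [ae_restrict_mem measurableSet_Ioi] with w hw
    have hw0 : (0:ℝ) < w := hw
    have hc : Continuous (fun z : ℝ => Real.exp (-(w + z^2/(4*w))) * w ^ (ν - 1)) := by
      apply Continuous.mul _ continuous_const
      apply Real.continuous_exp.comp
      exact ((continuous_const.add ((continuous_pow 2).div_const (4*w))).neg)
    have h0 : Tendsto (fun z : ℝ => Real.exp (-(w + z^2/(4*w))) * w ^ (ν - 1))
        (nhdsWithin 0 (Ioi (0:ℝ)))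
        (nhds (Real.exp (-(w + (0:ℝ)^2/(4*w))) * w ^ (ν - 1))) :=
      (hc.tendsto 0).mono_left nhdsWithin_le_nhds
    simpa using h0

/-- small-argument asymptotics of `besselK`. -/
lemma besselK_asymp {ν : ℝ} (hν : 0 < ν) :
    Tendsto (fun z => z ^ ν * besselK ν z) (nhdsWithin 0 (Ioi (0:ℝ)))
      (nhds ((2:ℝ) ^ (ν - 1) * Real.Gamma ν)) := by
  have h := (J_tendsto hν).const_mul ((2:ℝ) ^ (ν - 1))
  apply Tendsto.congr' _ h
  filter_upwards [self_mem_nhdsWithin] with z hzm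
  have hz : (0:ℝ) < z := hzm
  rw [besselK_eq_T1 ν z hz, T1_eq_J ν z hz]
  have hmul : z ^ ν * (2/z) ^ ν = 2 ^ ν := by
    rw [← Real.mul_rpow hz.le (by positivity)]
    rw [mul_div_cancel₀ _ hz.ne']
  have h2 : (2:ℝ) ^ ν = 2 * 2 ^ (ν - 1) := by
    rw [mul_comm, ← Real.rpow_add_one (by norm_num : (2:ℝ) ≠ 0) (ν - 1), sub_add_cancel]
  calc (2:ℝ) ^ (ν-1) * Jfun ν z = z ^ ν * (2/z) ^ ν * Jfun ν z / 2 := by rw [hmul, h2]; ring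
    _ = z ^ ν * ((2/z) ^ ν * Jfun ν z / 2) := by ring





lemma DLam_congr {b lam : ℝ} {f g : ℝ → ℝ} (h : ∀ x ∈ Ioi (0:ℝ), f x = g x) :
    ∀ y ∈ Ioi (0:ℝ), DLam b lam f y = DLam b lam g y := by
  have hd : ∀ x ∈ Ioi (0:ℝ), deriv f x = deriv g x := by
    intro x hx
    apply Filter.EventuallyEq.deriv_eq
    filter_upwards [Ioi_mem_nhds (show (0:ℝ) < x from hx)] with t ht using h t ht
  intro y hy
  have hdd : deriv (deriv f) y = deriv (deriv g) y := by
    apply Filter.EventuallyEq.deriv_eq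
    filter_upwards [Ioi_mem_nhds (show (0:ℝ) < y from hy)] with t ht using hd t ht
  simp only [DLam, hdd, hd y hy, h y hy]

lemma DLamIter_congr {b lam : ℝ} {f g : ℝ → ℝ} (h : ∀ x ∈ Ioi (0:ℝ), f x = g x) :
    ∀ j : ℕ, ∀ y ∈ Ioi (0:ℝ), DLamIter b lam j f y = DLamIter b lam j g y := by
  intro j
  induction j with
  | zero => simpa [DLamIter] using h
  | succ j ih =>
      intro y hy
      simp only [DLamIter, Function.iterate_succ_apply'] at *
      exact DLam_congr ih y hy

lemma iter_cphi {lam : ℝ} (hlam : 0 < lam) (b C₀ ν₀ : ℝ) :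
    ∀ j : ℕ, ∀ y ∈ Ioi (0:ℝ),
      DLamIter b lam j (fun t => C₀ * phi lam ν₀ t) y
        = (C₀ * ∏ i ∈ Finset.range j, (lam * (b + 2*(ν₀ - i) - 1))) * phi lam (ν₀ - j) y := by
  intro j
  induction j with
  | zero => intro y hy; simp [DLamIter]
  | succ j ih =>
      intro y hy
      simp only [DLamIter, Function.iterate_succ_apply'] at *
      have step1 : DLam b lam ((DLam b lam)^[j] fun t => C₀ * phi lam ν₀ t) y
          = DLam b lam (fun t => (C₀ * ∏ i ∈ Finset.range j, (lam * (b + 2*(ν₀ - i) - 1)))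
              * phi lam (ν₀ - j) t) y :=
        DLam_congr ih y hy
      rw [step1, DLam_cphi hlam b _ _ (show (0:ℝ) < y from hy)]
      rw [Finset.prod_range_succ]
      rw [show ν₀ - (j:ℝ) - 1 = ν₀ - ((j:ℕ)+1:ℕ) by push_cast; ring]
      push_cast
      ring

lemma prod_desc (n : ℕ) : (∏ i ∈ Finset.range n, ((n:ℝ) - i)) = (Nat.factorial n : ℝ) := by
  rw [← Finset.prod_range_reflect]
  have hcongr : ∀ j ∈ Finset.range n, ((n:ℝ) - ((n - 1 - j : ℕ):ℝ)) = ((j:ℝ) + 1) := by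
    intro j hj
    rw [Finset.mem_range] at hj
    have h1 : n - 1 - j = n - (j+1) := by omega
    rw [h1, Nat.cast_sub (by omega)]
    push_cast
    ring
  rw [Finset.prod_congr rfl hcongr]
  have : (∏ j ∈ Finset.range n, ((j:ℝ) + 1)) = ((∏ j ∈ Finset.range n, (j + 1) : ℕ) : ℝ) := by
    push_cast
    rfl
  rw [this, Finset.prod_range_add_one_eq_factorial]




end BesselProofAux

open BesselProofAux

/-- for non-integer `s > 0`, `𝔟 = 1 − 2(s − ⌊s⌋)`,
`d_s = 2^𝔟·Γ((1+𝔟)/2)·⌊s⌋!/Γ(s)` and `λ > 0`, with `ψ_{s,λ}(y) = ψ_s(√λ·y)`,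
one has `y^𝔟·∂_y((D_𝔟 + λ)^{⌊s⌋} ψ_{s,λ})(y) → −d_s·λ^s` as `y → 0⁺`. -/
theorem psi_weighted_derivative_limit (s : ℝ) (hs : 0 < s) (hni : ∀ n : ℤ, s ≠ n)
    (b : ℝ) (hb : b = 1 - 2 * (s - (⌊s⌋₊ : ℝ)))
    (d : ℝ)
    (hd : d = (2 : ℝ) ^ b * Real.Gamma ((1 + b) / 2) * (Nat.factorial ⌊s⌋₊ : ℝ)
            / Real.Gamma s)
    (lam : ℝ) (hlam : 0 < lam) :
    Filter.Tendsto
      (fun y : ℝ =>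
        y ^ b * deriv (DLamIter b lam ⌊s⌋₊ (fun t => psi s (Real.sqrt lam * t))) y)
      (nhdsWithin 0 (Set.Ioi 0)) (nhds (-(d * lam ^ s))) := by
  set n := ⌊s⌋₊ with hn
  have hn_le : (n:ℝ) ≤ s := Nat.floor_le hs.le
  have hlt : s < (n:ℝ) + 1 := Nat.lt_floor_add_one s
  set σ : ℝ := s - n with hσ
  have hne : s ≠ (n:ℝ) := by
    have := hni (n:ℤ)
    simpa using this
  have hσ0 : 0 < σ := by
    rw [hσ]
    have : (n:ℝ) < s := lt_of_le_of_ne hn_le (Ne.symm hne)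
    linarith
  have hσ1 : σ < 1 := by rw [hσ]; linarith
  have hb' : b = 1 - 2*σ := by rw [hσ]; linarith [hb]
  set C₀ : ℝ := (2:ℝ)^(1-s) / Real.Gamma s with hC₀
  set F₀ : ℝ → ℝ := fun t => psi s (Real.sqrt lam * t) with hF₀
  have h_base : ∀ x ∈ Ioi (0:ℝ), F₀ x = C₀ * phi lam s x := by
    intro x hx
    have hx0 : (0:ℝ) < x := hx
    have hzpos : 0 < Real.sqrt lam * x := mul_pos (Real.sqrt_pos.2 hlam) hx0
    simp only [hF₀, psi, if_neg hzpos.ne', abs_of_pos hzpos, phi, hC₀]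
    ring
  set Cn : ℝ := C₀ * ∏ i ∈ Finset.range n, (lam * (b + 2*(s - i) - 1)) with hCn
  have h_iter : ∀ y ∈ Ioi (0:ℝ), DLamIter b lam n F₀ y = Cn * phi lam σ y := by
    intro y hy
    rw [DLamIter_congr h_base n y hy, iter_cphi hlam b C₀ s n y hy]
  have h_deriv : ∀ y ∈ Ioi (0:ℝ), deriv (DLamIter b lam n F₀) y
      = -(Cn * lam) * (y * phi lam (σ - 1) y) := by
    intro y hy
    have hy0 : (0:ℝ) < y := hy
    have hev : deriv (DLamIter b lam n F₀) y = deriv (fun t => Cn * phi lam σ t) y := by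
      apply Filter.EventuallyEq.deriv_eq
      filter_upwards [Ioi_mem_nhds hy0] with t ht using h_iter t ht
    rw [hev, (cphi_hasDerivAt hlam Cn σ hy0).deriv]
  have h_prod : (∏ i ∈ Finset.range n, (lam * (b + 2*(s - i) - 1)))
      = (2*lam)^n * (Nat.factorial n : ℝ) := by
    have hfac : ∀ i ∈ Finset.range n, lam * (b + 2*(s - i) - 1) = (2*lam) * ((n:ℝ) - i) := by
      intro i _
      rw [hb', hσ]
      ring
    rw [Finset.prod_congr rfl hfac, Finset.prod_mul_distrib, Finset.prod_const,
      Finset.card_range, prod_desc]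
  have h1σ : 0 < 1 - σ := by linarith
  have hcomp : Tendsto (fun y : ℝ => Real.sqrt lam * y) (nhdsWithin 0 (Ioi 0))
      (nhdsWithin 0 (Ioi 0)) := by
    apply tendsto_nhdsWithin_of_tendsto_nhds_of_eventually_within
    · have : Tendsto (fun y : ℝ => Real.sqrt lam * y) (nhds 0) (nhds (Real.sqrt lam * 0)) :=
        (continuous_const.mul continuous_id).tendsto 0
      rw [mul_zero] at this
      exact this.mono_left nhdsWithin_le_nhds
    · filter_upwards [self_mem_nhdsWithin] with y hy
      exact mul_pos (Real.sqrt_pos.2 hlam) hy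
  have hA : Tendsto (fun y => (Real.sqrt lam * y) ^ (1-σ) * besselK (1-σ) (Real.sqrt lam * y))
      (nhdsWithin 0 (Ioi 0)) (nhds ((2:ℝ)^((1-σ)-1) * Real.Gamma (1-σ))) :=
    (besselK_asymp h1σ).comp hcomp
  have hmain := hA.const_mul (-(Cn * lam) * lam ^ (σ-1))
  have hgs : Real.Gamma s ≠ 0 := (Real.Gamma_pos_of_pos hs).ne'
  have hconst : (-(Cn * lam) * lam ^ (σ-1)) * ((2:ℝ)^((1-σ)-1) * Real.Gamma (1-σ))
      = -(d * lam ^ s) := by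
    have hg12 : (1 + b)/2 = 1 - σ := by rw [hb']; ring
    have hl1 : lam^(σ-1) * lam = lam^σ := by
      rw [← Real.rpow_add_one hlam.ne' (σ-1), sub_add_cancel]
    have hl2 : (lam:ℝ)^(n:ℕ) * lam^σ = lam^s := by
      rw [← Real.rpow_natCast lam n, ← Real.rpow_add hlam]
      congr 1
      rw [hσ]; ring
    have h21 : (2:ℝ)^(1-s) * (2:ℝ)^(n:ℕ) * (2:ℝ)^((1-σ)-1) = (2:ℝ)^b := by
      rw [← Real.rpow_natCast (2:ℝ) n, ← Real.rpow_add (by norm_num : (0:ℝ) < 2),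
        ← Real.rpow_add (by norm_num : (0:ℝ) < 2)]
      congr 1
      rw [hb', hσ]; ring
    calc (-(Cn * lam) * lam ^ (σ-1)) * ((2:ℝ)^((1-σ)-1) * Real.Gamma (1-σ))
        = -( ((2:ℝ)^(1-s) * (2:ℝ)^(n:ℕ) * (2:ℝ)^((1-σ)-1))
            * ((lam:ℝ)^(n:ℕ) * (lam^(σ-1) * lam)) * (Nat.factorial n : ℝ)
            * Real.Gamma (1-σ) / Real.Gamma s ) := by
          rw [hCn, h_prod, hC₀, mul_pow]
          ring
      _ = -( (2:ℝ)^b * lam^s * (Nat.factorial n : ℝ) * Real.Gamma (1-σ) / Real.Gamma s ) := by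
          rw [h21, hl1, hl2]
      _ = -(d * lam ^ s) := by
          rw [hd, hg12]
          ring
  rw [← hconst]
  apply Tendsto.congr' _ hmain
  filter_upwards [self_mem_nhdsWithin] with y hy
  have hy0 : (0:ℝ) < y := hy
  rw [h_deriv y hy]
  set z : ℝ := Real.sqrt lam * y with hz
  have hzpos : 0 < z := mul_pos (Real.sqrt_pos.2 hlam) hy0
  have hKe : besselK (σ-1) z = besselK (1-σ) z := by
    rw [show σ-1 = -(1-σ) by ring, besselK_even]
  have e1 : z^(σ-1) = z^(1-σ) * z^(2*σ-2) := by
    rw [← Real.rpow_add hzpos]; congr 1; ring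
  have e2 : z^(2*σ-2) = (Real.sqrt lam)^(2*σ-2) * y^(2*σ-2) :=
    Real.mul_rpow (Real.sqrt_nonneg lam) hy0.le
  have e3 : (Real.sqrt lam)^(2*σ-2) = lam^(σ-1) := by
    rw [Real.sqrt_eq_rpow, ← Real.rpow_mul hlam.le]
    congr 1; ring
  have e4 : y ^ b * y * y ^ (2*σ-2) = 1 := by
    rw [← Real.rpow_add_one hy0.ne' b, ← Real.rpow_add hy0,
      show b + 1 + (2*σ-2) = 0 by rw [hb']; ring, Real.rpow_zero]
  simp only [phi, ← hz, hKe, e1, e2, e3]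
  linear_combination (Cn * lam * lam^(σ-1) * z^(1-σ) * besselK (1-σ) z) * e4
end
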